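/- arXiv:2412.20697 — 6 statements merged into one kernel-verified Lean document; each statement's English description precedes it below -/
import Mathlib

section
/- Let B ⊂ ℝ³ be a bounded measurable set, let s ∈ ℂ, and let f : ℝ³ → ℂ be integrable on B. Then for every x₀ ∈ ℝ³ whose distance to B is positive, the volume potential v(x) = ∫_B Φ_s(x,y) f(y) dy is Fréchet differentiable at x₀, and its derivative applied to a vector h ∈ ℝ³ equals ∫_B (i s − 1/‖x₀−y‖) · Φ_s(x₀,y) · (⟨x₀ − y, h⟩ / ‖x₀−y‖) · f(y) dy, i.e. one may differentiate under the integral sign. -/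
open MeasureTheory

/-- The Laplace-domain fundamental solution of the Helmholtz equation in ℝ³:
`Φ_s(x,y) = exp(i s ‖x−y‖) / (4π ‖x−y‖)`. -/
noncomputable def Phi (s : ℂ) (x y : EuclideanSpace ℝ (Fin 3)) : ℂ :=
  Complex.exp (Complex.I * s * (‖x - y‖ : ℂ)) / ((4 * Real.pi * ‖x - y‖ : ℝ) : ℂ)

lemma phiAux_hasDerivAt (s : ℂ) {t : ℝ} (ht : 0 < t) :
    HasDerivAt (fun t : ℝ => Complex.exp (Complex.I * s * (t : ℂ)) / ((4 * Real.pi * t : ℝ) : ℂ))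
      ((Complex.I * s - (t : ℂ)⁻¹) *
        (Complex.exp (Complex.I * s * (t : ℂ)) / ((4 * Real.pi * t : ℝ) : ℂ))) t := by
  have hpi : (0:ℝ) < 4 * Real.pi * t := by positivity
  have hne : ((4 * Real.pi * t : ℝ) : ℂ) ≠ 0 := by exact_mod_cast hpi.ne'
  have htc : (t : ℂ) ≠ 0 := by exact_mod_cast ht.ne'
  have hc : HasDerivAt (fun t : ℝ => Complex.exp (Complex.I * s * (t : ℂ)))
      (Complex.I * s * Complex.exp (Complex.I * s * (t : ℂ))) t := by
    have h1 : HasDerivAt (fun t : ℝ => (t : ℂ)) 1 t := by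
      simpa using (hasDerivAt_id t).ofReal_comp
    have h2 := (h1.const_mul (Complex.I * s)).cexp
    simpa [mul_comm] using h2
  have hd : HasDerivAt (fun t : ℝ => ((4 * Real.pi * t : ℝ) : ℂ)) ((4 * Real.pi : ℝ) : ℂ) t := by
    have h3 : HasDerivAt (fun t : ℝ => 4 * Real.pi * t) (4 * Real.pi) t := by
      simpa using (hasDerivAt_id t).const_mul (4 * Real.pi)
    exact h3.ofReal_comp
  have h := hc.div hd hne
  refine h.congr_deriv ?_
  have hpic : (Real.pi : ℂ) ≠ 0 := Complex.ofReal_ne_zero.mpr Real.pi_ne_zero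
  push_cast
  field_simp

lemma hasFDerivAt_norm_sub (y x : EuclideanSpace ℝ (Fin 3)) (hxy : x ≠ y) :
    HasFDerivAt (fun x => ‖x - y‖) ((‖x - y‖⁻¹ : ℝ) • (innerSL ℝ (x - y))) x := by
  have hr : 0 < ‖x - y‖ := by rw [norm_pos_iff, sub_ne_zero]; exact hxy
  have h1 : HasFDerivAt (fun x : EuclideanSpace ℝ (Fin 3) => ‖x - y‖ ^ 2)
      (2 • (innerSL ℝ (x - y)).comp (ContinuousLinearMap.id ℝ _)) x := by
    have := ((hasFDerivAt_id x).sub_const y).norm_sq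
    simpa using this
  have h2 := (Real.hasDerivAt_sqrt (by positivity : (‖x - y‖ ^ 2) ≠ 0)).comp_hasFDerivAt x h1
  have h3 : (Real.sqrt ∘ fun x : EuclideanSpace ℝ (Fin 3) => ‖x - y‖ ^ 2)
      = fun x => ‖x - y‖ := by
    funext z; simp [Function.comp, Real.sqrt_sq (norm_nonneg _)]
  rw [h3] at h2
  refine h2.congr_fderiv ?_
  ext v
  rw [Real.sqrt_sq (norm_nonneg _)]
  simp [two_smul]
  ring

lemma hasFDerivAt_Phi (s : ℂ) (y x : EuclideanSpace ℝ (Fin 3)) (hxy : x ≠ y) :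
    HasFDerivAt (fun x => Phi s x y)
      (((Complex.I * s - (‖x - y‖ : ℂ)⁻¹) * Phi s x y * (‖x - y‖ : ℂ)⁻¹) •
        (Complex.ofRealCLM.comp (innerSL ℝ (x - y)))) x := by
  have hr : 0 < ‖x - y‖ := by rw [norm_pos_iff, sub_ne_zero]; exact hxy
  have hg := phiAux_hasDerivAt s hr
  have hn := hasFDerivAt_norm_sub y x hxy
  have h := HasFDerivAt.comp x hg.hasFDerivAt hn
  have h3 : ((fun t : ℝ => Complex.exp (Complex.I * s * (t : ℂ)) / ((4 * Real.pi * t : ℝ) : ℂ)) ∘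
      fun x : EuclideanSpace ℝ (Fin 3) => ‖x - y‖) = fun x => Phi s x y := by
    funext z; simp [Function.comp, Phi]
  rw [h3] at h
  refine h.congr_fderiv ?_
  ext v
  simp only [ContinuousLinearMap.smul_apply, ContinuousLinearMap.comp_apply,
    Complex.ofRealCLM_apply, innerSL_apply_apply, smul_eq_mul, Complex.real_smul,
    ContinuousLinearMap.smulRight_apply, ContinuousLinearMap.one_apply,
    ContinuousLinearMap.toSpanSingleton_apply,
    Complex.ofReal_mul, Complex.ofReal_inv, Phi]
  push_cast
  ring

set_option maxHeartbeats 1000000 in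
/-- If `B ⊂ ℝ³` is bounded and measurable, `f` is integrable on `B`, and the
distance from `x₀` to `B` is positive, then the volume potential `v(x) = ∫_B Φ_s(x,y) f(y) dy`
is Fréchet differentiable at `x₀` and its derivative applied to `h` is
`∫_B (is − 1/‖x₀−y‖) Φ_s(x₀,y) (⟨x₀−y,h⟩/‖x₀−y‖) f(y) dy`. -/
theorem stmt3 (B : Set (EuclideanSpace ℝ (Fin 3)))
    (hBb : Bornology.IsBounded B) (hBm : MeasurableSet B)
    (s : ℂ) (f : EuclideanSpace ℝ (Fin 3) → ℂ)
    (hf : Integrable f (volume.restrict B))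
    (x₀ : EuclideanSpace ℝ (Fin 3)) (hx₀ : 0 < Metric.infDist x₀ B) :
    ∃ L : EuclideanSpace ℝ (Fin 3) →L[ℝ] ℂ,
      HasFDerivAt (fun x => ∫ y in B, Phi s x y * f y) L x₀ ∧
      ∀ h : EuclideanSpace ℝ (Fin 3),
        L h = ∫ y in B,
          (Complex.I * s - 1 / ((‖x₀ - y‖ : ℝ) : ℂ)) * Phi s x₀ y *
            (((inner ℝ (x₀ - y) h : ℝ) / ‖x₀ - y‖ : ℝ) : ℂ) * f y := by
  set d := Metric.infDist x₀ B with hdd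
  have hd0 : 0 < d := hx₀
  have hd2 : 0 < d / 2 := by linarith
  obtain ⟨M, hM⟩ := hBb.subset_closedBall x₀
  set R : ℝ := |M| + d / 2 with hRR
  have hR0 : 0 < R := by have := abs_nonneg M; rw [hRR]; linarith
  have hlow : ∀ y ∈ B, ∀ x ∈ Metric.ball x₀ (d / 2), d / 2 ≤ ‖x - y‖ := by
    intro y hy x hx
    have h1 : d ≤ dist x₀ y := Metric.infDist_le_dist_of_mem hy
    have h2 : dist x₀ x < d / 2 := by rw [Metric.mem_ball, dist_comm] at hx; exact hx
    have h3 := dist_triangle x₀ x y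
    have h4 : dist x y = ‖x - y‖ := dist_eq_norm x y
    linarith
  have hupp : ∀ y ∈ B, ∀ x ∈ Metric.ball x₀ (d / 2), ‖x - y‖ ≤ R := by
    intro y hy x hx
    have h1 : dist y x₀ ≤ M := hM hy
    have h2 : dist x₀ x < d / 2 := by rw [Metric.mem_ball, dist_comm] at hx; exact hx
    have h3 := dist_triangle x x₀ y
    have h4 : dist x y = ‖x - y‖ := dist_eq_norm x y
    have h5 : M ≤ |M| := le_abs_self M
    rw [hRR]
    have h6 : dist x₀ y = dist y x₀ := dist_comm _ _
    have h7 : dist x x₀ = dist x₀ x := dist_comm _ _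
    linarith
  -- uniform bound on Phi
  have hΦ : ∀ y ∈ B, ∀ x ∈ Metric.ball x₀ (d / 2),
      ‖Phi s x y‖ ≤ Real.exp (‖s‖ * R) / (2 * Real.pi * d) := by
    intro y hy x hx
    have hr := hlow y hy x hx
    have hrR := hupp y hy x hx
    have hrpos : 0 < ‖x - y‖ := lt_of_lt_of_le hd2 hr
    rw [Phi, norm_div]
    have hnum : ‖Complex.exp (Complex.I * s * (‖x - y‖ : ℂ))‖ ≤ Real.exp (‖s‖ * R) := by
      rw [Complex.norm_exp]
      apply Real.exp_le_exp.mpr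
      have hre : (Complex.I * s * ((‖x - y‖ : ℝ) : ℂ)).re = -s.im * ‖x - y‖ := by
        simp [Complex.mul_re, Complex.mul_im]
      rw [hre]
      calc -s.im * ‖x - y‖ ≤ |s.im| * ‖x - y‖ := by
            apply mul_le_mul_of_nonneg_right (neg_le_abs s.im) hrpos.le
        _ ≤ ‖s‖ * R := by
            apply mul_le_mul _ hrR hrpos.le (norm_nonneg s)
            exact Complex.abs_im_le_norm s
    have hden : ‖((4 * Real.pi * ‖x - y‖ : ℝ) : ℂ)‖ = 4 * Real.pi * ‖x - y‖ := by
      rw [Complex.norm_real, Real.norm_eq_abs, abs_of_pos (by positivity)]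
    rw [hden]
    apply div_le_div₀ (Real.exp_pos _).le hnum (by positivity)
    nlinarith [Real.pi_pos]
  set C : ℝ := (‖s‖ + 2 / d) * (Real.exp (‖s‖ * R) / (2 * Real.pi * d)) * (2 / d) * R with hC
  set F' : EuclideanSpace ℝ (Fin 3) → EuclideanSpace ℝ (Fin 3) →
      (EuclideanSpace ℝ (Fin 3) →L[ℝ] ℂ) :=
    fun x y => ((Complex.I * s - (‖x - y‖ : ℂ)⁻¹) * Phi s x y * (‖x - y‖ : ℂ)⁻¹ * f y) •
      (Complex.ofRealCLM.comp (innerSL ℝ (x - y))) with hF'def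
  have hx₀ball : x₀ ∈ Metric.ball x₀ (d / 2) := Metric.mem_ball_self hd2
  -- measurability of the integrand
  have hmeas : ∀ x, AEStronglyMeasurable (fun y => Phi s x y * f y) (volume.restrict B) := by
    intro x
    refine AEStronglyMeasurable.mul ?_ hf.1
    apply Measurable.aestronglyMeasurable
    apply Measurable.div
    · exact (Complex.continuous_exp.comp (by fun_prop)).measurable
    · exact (by fun_prop :
        Continuous fun y : EuclideanSpace ℝ (Fin 3) => ((4 * Real.pi * ‖x - y‖ : ℝ) : ℂ)).measurable
  have hF_int : Integrable (fun y => Phi s x₀ y * f y) (volume.restrict B) := by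
    refine (hf.norm.const_mul (Real.exp (‖s‖ * R) / (2 * Real.pi * d))).mono' (hmeas x₀) ?_
    filter_upwards [ae_restrict_mem hBm] with y hy
    rw [norm_mul]
    exact mul_le_mul_of_nonneg_right (hΦ y hy x₀ hx₀ball) (norm_nonneg _)
  -- measurability of F' x₀
  have hcontL : Continuous fun y : EuclideanSpace ℝ (Fin 3) =>
      Complex.ofRealCLM.comp (innerSL ℝ (x₀ - y)) := by
    have h1 : Continuous fun y : EuclideanSpace ℝ (Fin 3) => innerSL ℝ (x₀ - y) :=
      (innerSL ℝ).continuous.comp (continuous_const.sub continuous_id)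
    exact ((ContinuousLinearMap.compL ℝ (EuclideanSpace ℝ (Fin 3)) ℝ ℂ)
      Complex.ofRealCLM).continuous.comp h1
  have mPhi : Measurable fun y => Phi s x₀ y := by
    apply Measurable.div
    · exact (Complex.continuous_exp.comp (by fun_prop)).measurable
    · exact (by fun_prop :
        Continuous fun y : EuclideanSpace ℝ (Fin 3) => ((4 * Real.pi * ‖x₀ - y‖ : ℝ) : ℂ)).measurable
  have m2 : Measurable fun y : EuclideanSpace ℝ (Fin 3) => ((‖x₀ - y‖ : ℝ) : ℂ)⁻¹ :=
    ((by fun_prop :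
      Continuous fun y : EuclideanSpace ℝ (Fin 3) => ((‖x₀ - y‖ : ℝ) : ℂ)).measurable).inv
  have hF'_meas : AEStronglyMeasurable (F' x₀) (volume.restrict B) := by
    rw [hF'def]
    exact (((((measurable_const.sub m2).mul mPhi).mul m2).aestronglyMeasurable).mul
      hf.1).smul hcontL.aestronglyMeasurable
  -- the bound
  have h_bound : ∀ᵐ y ∂(volume.restrict B), ∀ x ∈ Metric.ball x₀ (d / 2),
      ‖F' x y‖ ≤ C * ‖f y‖ := by
    filter_upwards [ae_restrict_mem hBm] with y hy
    intro x hx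
    have hr := hlow y hy x hx
    have hrR := hupp y hy x hx
    have hrpos : 0 < ‖x - y‖ := lt_of_lt_of_le hd2 hr
    have hinv : ‖x - y‖⁻¹ ≤ 2 / d := by
      have h1 := one_div_le_one_div_of_le hd2 hr
      rw [one_div, one_div, inv_div] at h1
      exact h1
    have hL : ‖Complex.ofRealCLM.comp (innerSL ℝ (x - y))‖ ≤ ‖x - y‖ := by
      refine le_trans (ContinuousLinearMap.opNorm_comp_le _ _) ?_
      have h1 : ‖(Complex.ofRealCLM : ℝ →L[ℝ] ℂ)‖ ≤ 1 := by
        refine ContinuousLinearMap.opNorm_le_bound _ zero_le_one ?_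
        intro t; simp
      have h2 : ‖innerSL ℝ (x - y)‖ ≤ ‖x - y‖ := (innerSL_apply_norm (𝕜 := ℝ) (x - y)).le
      calc ‖(Complex.ofRealCLM : ℝ →L[ℝ] ℂ)‖ * ‖innerSL ℝ (x - y)‖
          ≤ 1 * ‖x - y‖ := mul_le_mul h1 h2 (norm_nonneg _) zero_le_one
        _ = ‖x - y‖ := one_mul _
    rw [hF'def]
    beta_reduce
    refine le_trans (ContinuousLinearMap.opNorm_smul_le _ _) ?_
    have e1 : ‖Complex.I * s - ((‖x - y‖ : ℝ) : ℂ)⁻¹‖ ≤ ‖s‖ + 2 / d := by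
      refine le_trans (norm_sub_le _ _) ?_
      have a1 : ‖Complex.I * s‖ = ‖s‖ := by simp
      have a2 : ‖(((‖x - y‖ : ℝ) : ℂ))⁻¹‖ = ‖x - y‖⁻¹ := by
        rw [norm_inv, Complex.norm_real, Real.norm_eq_abs, abs_of_pos hrpos]
      rw [a1, a2]
      linarith
    have e2 := hΦ y hy x hx
    have e3 : ‖(((‖x - y‖ : ℝ) : ℂ))⁻¹‖ ≤ 2 / d := by
      rw [norm_inv, Complex.norm_real, Real.norm_eq_abs, abs_of_pos hrpos]
      exact hinv
    have hexp := (Real.exp_pos (‖s‖ * R)).le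
    calc ‖(Complex.I * s - ((‖x - y‖ : ℝ) : ℂ)⁻¹) * Phi s x y * ((‖x - y‖ : ℝ) : ℂ)⁻¹ * f y‖ *
          ‖Complex.ofRealCLM.comp (innerSL ℝ (x - y))‖
        ≤ ((‖s‖ + 2 / d) * (Real.exp (‖s‖ * R) / (2 * Real.pi * d)) * (2 / d) * ‖f y‖) * R := by
          rw [norm_mul, norm_mul, norm_mul]
          have hb1 : (0:ℝ) ≤ ‖s‖ + 2 / d := by positivity
          have hb2 : (0:ℝ) ≤ Real.exp (‖s‖ * R) / (2 * Real.pi * d) := by positivity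
          gcongr
          exact hL.trans hrR
        _ = C * ‖f y‖ := by rw [hC]; ring
  -- the pointwise derivative
  have h_diff : ∀ᵐ y ∂(volume.restrict B), ∀ x ∈ Metric.ball x₀ (d / 2),
      HasFDerivAt (fun x => Phi s x y * f y) (F' x y) x := by
    filter_upwards [ae_restrict_mem hBm] with y hy
    intro x hx
    have hr := hlow y hy x hx
    have hxy : x ≠ y := by
      intro h
      rw [h, sub_self, norm_zero] at hr
      linarith
    have hd1 := (hasFDerivAt_Phi s y x hxy).mul_const (f y)
    refine hd1.congr_fderiv ?_
    rw [hF'def]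
    beta_reduce
    ext v
    simp only [ContinuousLinearMap.smul_apply, ContinuousLinearMap.comp_apply,
      Complex.ofRealCLM_apply, innerSL_apply_apply, smul_eq_mul,
      ContinuousLinearMap.mul_apply', ContinuousLinearMap.coe_smul']
    ring
  have key := hasFDerivAt_integral_of_dominated_of_fderiv_le (Metric.ball_mem_nhds x₀ hd2)
    (Filter.Eventually.of_forall hmeas) hF_int hF'_meas h_bound
    (hf.norm.const_mul C) h_diff
  refine ⟨_, key, ?_⟩
  intro h
  have hF'_int : Integrable (F' x₀) (volume.restrict B) := by
    refine (hf.norm.const_mul C).mono' hF'_meas ?_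
    filter_upwards [h_bound] with y hy using hy x₀ hx₀ball
  rw [ContinuousLinearMap.integral_apply hF'_int]
  refine integral_congr_ae (Filter.Eventually.of_forall fun y => ?_)
  rw [hF'def]
  beta_reduce
  simp only [ContinuousLinearMap.smul_apply, ContinuousLinearMap.comp_apply,
    Complex.ofRealCLM_apply, innerSL_apply_apply, smul_eq_mul, one_div, Complex.ofReal_div]
  ring
end

section
/- Let B and D be bounded measurable subsets of ℝ³ of finite Lebesgue measure, let d > 0 satisfy ‖x − y‖ ≥ d for all x ∈ D and y ∈ B, let s ∈ ℂ with Im s ≥ 0, and let f : ℝ³ → ℂ be square-integrable on B. For i ∈ {1,2,3} define wᵢ(x) = ∫_B [ (i s · e^{i s ‖x−y‖} · (xᵢ − yᵢ))/(4π ‖x−y‖²) − (e^{i s ‖x−y‖} · (xᵢ − yᵢ))/(4π ‖x−y‖³) ] f(y) dy. Then ∫_D |wᵢ(x)|² dx ≤ vol(D) · vol(B) · (|s|/(4πd) + 1/(4πd²))² · ∫_B |f(y)|² dy. -/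
open MeasureTheory

lemma kbound (s : ℂ) (hs : 0 ≤ s.im) (d r c : ℝ) (hd : 0 < d) (hr : d ≤ r) (hc : |c| ≤ r) :
    ‖Complex.I * s * Complex.exp (Complex.I * s * (r:ℂ)) * (c:ℂ) / ((4*Real.pi*r^2 : ℝ):ℂ)
      - Complex.exp (Complex.I * s * (r:ℂ)) * (c:ℂ) / ((4*Real.pi*r^3 : ℝ):ℂ)‖
    ≤ ‖s‖ / (4*Real.pi*d) + 1/(4*Real.pi*d^2) := by
  have hr0 : 0 < r := hd.trans_le hr
  have hπ : 0 < Real.pi := Real.pi_pos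
  have hE : ‖Complex.exp (Complex.I * s * (r:ℂ))‖ ≤ 1 := by
    rw [Complex.norm_exp, Real.exp_le_one_iff]
    have : (Complex.I * s * (r:ℂ)).re = -s.im * r := by
      simp [Complex.mul_re, Complex.mul_im]
    rw [this]
    exact mul_nonpos_of_nonpos_of_nonneg (neg_nonpos.mpr hs) hr0.le
  have hE0 : 0 ≤ ‖Complex.exp (Complex.I * s * (r:ℂ))‖ := norm_nonneg _
  set E := ‖Complex.exp (Complex.I * s * (r:ℂ))‖ with hEdef
  have hs0 : 0 ≤ ‖s‖ := norm_nonneg s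
  have hc0 : 0 ≤ |c| := abs_nonneg c
  have h2pos : (0:ℝ) < 4*Real.pi*r^2 := by positivity
  have h3pos : (0:ℝ) < 4*Real.pi*r^3 := by positivity
  have hd2 : (0:ℝ) < 4*Real.pi*d := by positivity
  have hd3 : (0:ℝ) < 4*Real.pi*d^2 := by positivity
  have e1 : ‖Complex.I * s * Complex.exp (Complex.I * s * (r:ℂ)) * (c:ℂ) /
      ((4*Real.pi*r^2 : ℝ):ℂ)‖ = ‖s‖ * E * |c| / (4*Real.pi*r^2) := by
    rw [norm_div, norm_mul, norm_mul, norm_mul]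
    simp [Complex.norm_real, Real.norm_eq_abs, abs_of_pos hπ, abs_of_pos hr0, hEdef]
  have e2 : ‖Complex.exp (Complex.I * s * (r:ℂ)) * (c:ℂ) / ((4*Real.pi*r^3 : ℝ):ℂ)‖
      = E * |c| / (4*Real.pi*r^3) := by
    rw [norm_div, norm_mul]
    simp [Complex.norm_real, Real.norm_eq_abs, abs_of_pos hπ, abs_of_pos hr0, hEdef]
  calc ‖_ - _‖ ≤ ‖Complex.I * s * Complex.exp (Complex.I * s * (r:ℂ)) * (c:ℂ) /
          ((4*Real.pi*r^2 : ℝ):ℂ)‖ +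
        ‖Complex.exp (Complex.I * s * (r:ℂ)) * (c:ℂ) / ((4*Real.pi*r^3 : ℝ):ℂ)‖ :=
        norm_sub_le _ _
    _ ≤ ‖s‖ / (4*Real.pi*d) + 1/(4*Real.pi*d^2) := by
        rw [e1, e2]
        have H1 : ‖s‖ * E * |c| / (4*Real.pi*r^2) ≤ ‖s‖ / (4*Real.pi*d) := by
          rw [div_le_div_iff₀ h2pos hd2]
          have hcE : ‖s‖ * E * |c| ≤ ‖s‖ * r := by
            calc ‖s‖ * E * |c| ≤ ‖s‖ * 1 * r := by
                  apply mul_le_mul (mul_le_mul_of_nonneg_left hE hs0) hc hc0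
                  positivity
              _ = ‖s‖ * r := by ring
          calc ‖s‖ * E * |c| * (4*Real.pi*d) ≤ ‖s‖ * r * (4*Real.pi*r) := by
                apply mul_le_mul hcE (by gcongr) (by positivity) (by positivity)
            _ = ‖s‖ * (4*Real.pi*r^2) := by ring
        have H2 : E * |c| / (4*Real.pi*r^3) ≤ 1/(4*Real.pi*d^2) := by
          rw [div_le_div_iff₀ h3pos hd3]
          calc E * |c| * (4*Real.pi*d^2) ≤ 1 * r * (4*Real.pi*r^2) := by
                apply mul_le_mul (mul_le_mul hE hc hc0 zero_le_one) (by gcongr) (by positivity)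
                  (by positivity)
            _ = 1 * (4*Real.pi*r^3) := by ring
        exact add_le_add H1 H2

lemma coord_le_norm (z : EuclideanSpace ℝ (Fin 3)) (i : Fin 3) : |z i| ≤ ‖z‖ := by
  rw [EuclideanSpace.norm_eq, ← Real.sqrt_sq_eq_abs (z i)]
  apply Real.sqrt_le_sqrt
  have := Finset.single_le_sum (f := fun j => ‖z j‖ ^ 2) (fun j _ => sq_nonneg _)
    (Finset.mem_univ i)
  simpa [Real.norm_eq_abs, sq_abs] using this

lemma cs_lemma {α : Type*} [MeasurableSpace α] (μ : Measure α) [IsFiniteMeasure μ]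
    (f : α → ℂ) (hf : MemLp f 2 μ) :
    ∫ a, ‖f a‖ ∂μ ≤ Real.sqrt (∫ a, ‖f a‖ ^ 2 ∂μ) * Real.sqrt (μ Set.univ).toReal := by
  have hpq : (2:ℝ).HolderConjugate 2 := by constructor <;> norm_num
  have h2 : ENNReal.ofReal (2:ℝ) = 2 := by simp [ENNReal.ofReal_ofNat]
  have hfn : MemLp (fun a => ‖f a‖) (ENNReal.ofReal (2:ℝ)) μ := by rw [h2]; exact hf.norm
  have hgn : MemLp (fun _ : α => (1:ℝ)) (ENNReal.ofReal (2:ℝ)) μ := memLp_const 1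
  have := integral_mul_le_Lp_mul_Lq_of_nonneg hpq
    (Filter.Eventually.of_forall fun a => norm_nonneg (f a))
    (Filter.Eventually.of_forall fun _ => zero_le_one) hfn hgn
  simp only [mul_one, Real.one_rpow] at this
  calc ∫ a, ‖f a‖ ∂μ ≤ (∫ a, ‖f a‖ ^ (2:ℝ) ∂μ) ^ (1/2:ℝ) * (∫ a, (1:ℝ) ∂μ) ^ (1/2:ℝ) := by
        convert this using 3 <;> simp [Real.rpow_natCast]
    _ = Real.sqrt (∫ a, ‖f a‖ ^ 2 ∂μ) * Real.sqrt (μ Set.univ).toReal := by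
        rw [Real.sqrt_eq_rpow, Real.sqrt_eq_rpow]
        congr 2
        · apply integral_congr_ae; filter_upwards with a
          rw [show (2:ℝ) = ((2:ℕ):ℝ) by norm_num, Real.rpow_natCast]
        · simp [Measure.real]


/-- Let `B, D ⊂ ℝ³` be bounded measurable sets of finite measure separated by a
distance `d > 0`, `Im s ≥ 0`, and `f` square-integrable on `B`. For the `i`-th derivative of the
volume potential,
`wᵢ(x) = ∫_B [(is e^{is‖x−y‖}(xᵢ−yᵢ))/(4π‖x−y‖²) − (e^{is‖x−y‖}(xᵢ−yᵢ))/(4π‖x−y‖³)] f(y) dy`,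
one has `∫_D |wᵢ|² ≤ vol(D)·vol(B)·(|s|/(4πd)+1/(4πd²))² ∫_B |f|²`. -/
theorem stmt4
    (B D : Set (EuclideanSpace ℝ (Fin 3)))
    (hBb : Bornology.IsBounded B) (hDb : Bornology.IsBounded D)
    (hBm : MeasurableSet B) (hDm : MeasurableSet D)
    (hBfin : volume B < ⊤) (hDfin : volume D < ⊤)
    (d : ℝ) (hd : 0 < d)
    (hdist : ∀ x ∈ D, ∀ y ∈ B, d ≤ ‖x - y‖)
    (s : ℂ) (hs : 0 ≤ s.im)
    (f : EuclideanSpace ℝ (Fin 3) → ℂ)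
    (hf : MemLp f 2 (volume.restrict B))
    (i : Fin 3) :
    (∫ x in D,
        ‖∫ y in B,
            (Complex.I * s * Complex.exp (Complex.I * s * (‖x - y‖ : ℂ)) *
                ((x i - y i : ℝ) : ℂ) / ((4 * Real.pi * ‖x - y‖ ^ 2 : ℝ) : ℂ)
              - Complex.exp (Complex.I * s * (‖x - y‖ : ℂ)) * ((x i - y i : ℝ) : ℂ) /
                ((4 * Real.pi * ‖x - y‖ ^ 3 : ℝ) : ℂ)) * f y‖ ^ 2) ≤
      (volume D).toReal * (volume B).toReal *
          (‖s‖ / (4 * Real.pi * d) + 1 / (4 * Real.pi * d ^ 2)) ^ 2 *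
        ∫ y in B, ‖f y‖ ^ 2 := by
  set C := ‖s‖ / (4 * Real.pi * d) + 1 / (4 * Real.pi * d ^ 2) with hCdef
  have hπ : 0 < Real.pi := Real.pi_pos
  have hC0 : 0 ≤ C := by positivity
  set A := ∫ y in B, ‖f y‖ ^ 2 with hAdef
  have hA0 : 0 ≤ A := integral_nonneg fun y => sq_nonneg _
  set V := (volume B).toReal with hVdef
  have hV0 : 0 ≤ V := ENNReal.toReal_nonneg
  haveI : IsFiniteMeasure (volume.restrict B) :=
    ⟨by rwa [Measure.restrict_apply_univ]⟩
  have hfi : Integrable f (volume.restrict B) := hf.integrable (by norm_num)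
  have hCS : ∫ y in B, ‖f y‖ ≤ Real.sqrt A * Real.sqrt V := by
    have := cs_lemma (volume.restrict B) f hf
    rwa [Measure.restrict_apply_univ] at this
  set w := fun x : EuclideanSpace ℝ (Fin 3) => ∫ y in B,
      (Complex.I * s * Complex.exp (Complex.I * s * (‖x - y‖ : ℂ)) *
          ((x i - y i : ℝ) : ℂ) / ((4 * Real.pi * ‖x - y‖ ^ 2 : ℝ) : ℂ)
        - Complex.exp (Complex.I * s * (‖x - y‖ : ℂ)) * ((x i - y i : ℝ) : ℂ) /
          ((4 * Real.pi * ‖x - y‖ ^ 3 : ℝ) : ℂ)) * f y with hwdef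
  have key : ∀ x ∈ D, ‖w x‖ ≤ C * (Real.sqrt A * Real.sqrt V) := by
    intro x hx
    calc ‖w x‖ ≤ ∫ y in B,
          ‖(Complex.I * s * Complex.exp (Complex.I * s * (‖x - y‖ : ℂ)) *
              ((x i - y i : ℝ) : ℂ) / ((4 * Real.pi * ‖x - y‖ ^ 2 : ℝ) : ℂ)
            - Complex.exp (Complex.I * s * (‖x - y‖ : ℂ)) * ((x i - y i : ℝ) : ℂ) /
              ((4 * Real.pi * ‖x - y‖ ^ 3 : ℝ) : ℂ)) * f y‖ :=
        norm_integral_le_integral_norm _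
      _ ≤ ∫ y in B, C * ‖f y‖ := by
          apply integral_mono_of_nonneg
            (Filter.Eventually.of_forall fun y => norm_nonneg _) (hfi.norm.const_mul C)
          filter_upwards [ae_restrict_mem hBm] with y hy
          rw [norm_mul]
          apply mul_le_mul_of_nonneg_right _ (norm_nonneg _)
          have hcoord : |x i - y i| ≤ ‖x - y‖ := by
            have := coord_le_norm (x - y) i
            simpa using this
          exact kbound s hs d ‖x - y‖ (x i - y i) hd (hdist x hx y hy) hcoord
      _ = C * ∫ y in B, ‖f y‖ := integral_const_mul C _
      _ ≤ C * (Real.sqrt A * Real.sqrt V) := mul_le_mul_of_nonneg_left hCS hC0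
  have key2 : ∀ x ∈ D, ‖‖w x‖ ^ 2‖ ≤ C ^ 2 * V * A := by
    intro x hx
    rw [Real.norm_eq_abs, abs_of_nonneg (sq_nonneg _)]
    calc ‖w x‖ ^ 2 ≤ (C * (Real.sqrt A * Real.sqrt V)) ^ 2 :=
        pow_le_pow_left₀ (norm_nonneg _) (key x hx) 2
      _ = C ^ 2 * V * A := by
          rw [mul_pow, mul_pow, Real.sq_sqrt hA0, Real.sq_sqrt hV0]; ring
  calc (∫ x in D, ‖w x‖ ^ 2) ≤ ‖∫ x in D, ‖w x‖ ^ 2‖ := le_abs_self _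
    _ ≤ (C ^ 2 * V * A) * (volume D).toReal :=
        norm_setIntegral_le_of_norm_le_const hDfin key2
    _ = (volume D).toReal * V * C ^ 2 * A := by ring
end

section
/- Let s ∈ ℂ and y ∈ ℝ³. The function u(x) = Φ_s(x,y) = e^{i s ‖x−y‖}/(4π ‖x−y‖) is twice continuously differentiable on ℝ³ \ {y} and satisfies the Helmholtz equation Δu(x) + s² u(x) = 0 for every x ≠ y, where Δ denotes the Laplacian (the sum of the second partial derivatives with respect to the coordinates of x). -/
open MeasureTheory

/-- The Laplacian of `u : ℝ³ → ℂ` at `x`: the sum of the second derivatives of `u` along the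
coordinate directions. -/
noncomputable def lap (u : EuclideanSpace ℝ (Fin 3) → ℂ) (x : EuclideanSpace ℝ (Fin 3)) : ℂ :=
  ∑ i : Fin 3, iteratedDeriv 2 (fun t : ℝ => u (x + t • EuclideanSpace.single i (1 : ℝ))) 0

noncomputable def Fc (s : ℂ) (z : ℂ) : ℂ :=
  Complex.exp (Complex.I * s * z) / (4 * Real.pi * z)

noncomputable def Gc (s : ℂ) (z : ℂ) : ℂ :=
  (Complex.I * s * z - 1) * Complex.exp (Complex.I * s * z) / (4 * Real.pi * z ^ 2)

noncomputable def Hc (s : ℂ) (z : ℂ) : ℂ :=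
  (-s ^ 2 * z ^ 2 - 2 * Complex.I * s * z + 2) * Complex.exp (Complex.I * s * z) /
    (4 * Real.pi * z ^ 3)

lemma pi_c_ne : (Real.pi : ℂ) ≠ 0 := by
  exact_mod_cast Real.pi_ne_zero

lemma hasDerivAt_Fc (s : ℂ) {z : ℂ} (hz : z ≠ 0) : HasDerivAt (Fc s) (Gc s z) z := by
  have hpc : (Real.pi : ℂ) ≠ 0 := pi_c_ne
  have he : HasDerivAt (fun z : ℂ => Complex.exp (Complex.I * s * z))
      (Complex.exp (Complex.I * s * z) * (Complex.I * s)) z := by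
    simpa using ((hasDerivAt_id z).const_mul (Complex.I * s)).cexp
  have hd : HasDerivAt (fun z : ℂ => 4 * (Real.pi : ℂ) * z) (4 * Real.pi) z := by
    simpa using (hasDerivAt_id z).const_mul (4 * (Real.pi : ℂ))
  have hne : 4 * (Real.pi : ℂ) * z ≠ 0 := by
    simp [hz, pi_c_ne, Real.pi_ne_zero]
  have := he.div hd hne
  refine this.congr_deriv ?_
  symm
  unfold Gc
  field_simp

lemma hasDerivAt_Gc (s : ℂ) {z : ℂ} (hz : z ≠ 0) : HasDerivAt (Gc s) (Hc s z) z := by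
  have hpc : (Real.pi : ℂ) ≠ 0 := pi_c_ne
  have he : HasDerivAt (fun z : ℂ => (Complex.I * s * z - 1) * Complex.exp (Complex.I * s * z))
      ((Complex.I * s) * Complex.exp (Complex.I * s * z) +
        (Complex.I * s * z - 1) * (Complex.exp (Complex.I * s * z) * (Complex.I * s))) z := by
    have h1 : HasDerivAt (fun z : ℂ => Complex.I * s * z - 1) (Complex.I * s) z := by
      simpa using ((hasDerivAt_id z).const_mul (Complex.I * s)).sub_const 1
    have h2 : HasDerivAt (fun z : ℂ => Complex.exp (Complex.I * s * z))
        (Complex.exp (Complex.I * s * z) * (Complex.I * s)) z := by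
      simpa using ((hasDerivAt_id z).const_mul (Complex.I * s)).cexp
    exact h1.mul h2
  have hd : HasDerivAt (fun z : ℂ => 4 * (Real.pi : ℂ) * z ^ 2) (4 * Real.pi * (2 * z)) z := by
    simpa using ((hasDerivAt_pow 2 z).const_mul (4 * (Real.pi : ℂ)))
  have hne : 4 * (Real.pi : ℂ) * z ^ 2 ≠ 0 := by
    simp [hz, pi_c_ne, Real.pi_ne_zero]
  have := he.div hd hne
  refine this.congr_deriv ?_
  symm
  unfold Hc
  have hI : Complex.I ^ 2 = -1 := Complex.I_sq
  field_simp
  ring_nf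
  rw [hI]
  field_simp
  ring

/-- Key 1D computation: second derivative along a line. -/
lemma key_identity (s : ℂ) {r : ℝ} (hr : 0 < r) :
    Hc s r + (2 / r : ℝ) • Gc s r + s ^ 2 * Fc s r = 0 := by
  have hrc : (r : ℂ) ≠ 0 := by exact_mod_cast hr.ne'
  have hpc : (Real.pi : ℂ) ≠ 0 := pi_c_ne
  have hexp : Complex.exp (Complex.I * s * r) ≠ 0 := Complex.exp_ne_zero _
  unfold Hc Gc Fc
  rw [Complex.real_smul]
  push_cast
  field_simp
  ring_nf


lemma phi_eq_Fc (s : ℂ) (x y : EuclideanSpace ℝ (Fin 3)) :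
    Phi s x y = Fc s (‖x - y‖ : ℝ) := by
  unfold Phi Fc
  push_cast
  ring_nf

lemma second_deriv_line (s : ℂ) (x y : EuclideanSpace ℝ (Fin 3)) (hxy : x ≠ y) (i : Fin 3) :
    iteratedDeriv 2 (fun t : ℝ => Phi s (x + t • EuclideanSpace.single i (1 : ℝ)) y) 0
      = (((x - y) i / ‖x - y‖) • (((x - y) i / ‖x - y‖) • Hc s ‖x - y‖))
        + ((1 / ‖x - y‖ - ((x - y) i) ^ 2 / ‖x - y‖ ^ 3) • Gc s ‖x - y‖) := by
  set v : EuclideanSpace ℝ (Fin 3) := x - y with hv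
  set r : ℝ := ‖v‖ with hrdef
  have hr : 0 < r := by
    simpa [hrdef] using norm_pos_iff.2 (sub_ne_zero.2 hxy)
  have hrne : r ≠ 0 := hr.ne'
  have hrc : (r : ℂ) ≠ 0 := by exact_mod_cast hrne
  set a : ℝ := v i with ha
  set e : EuclideanSpace ℝ (Fin 3) := EuclideanSpace.single i (1 : ℝ) with he
  set Q : ℝ → ℝ := fun t => r ^ 2 + 2 * a * t + t ^ 2 with hQ
  have hQnorm : ∀ t : ℝ, ‖v + t • e‖ ^ 2 = Q t := by
    intro t
    have h1 : @inner ℝ _ _ v (t • e) = t * a := by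
      rw [real_inner_smul_right, he]
      have : @inner ℝ _ _ v (EuclideanSpace.single i (1 : ℝ)) = v i := by
        simp [EuclideanSpace.inner_single_right]
      rw [this]
    have h2 : ‖t • e‖ ^ 2 = t ^ 2 := by
      rw [norm_smul, he, EuclideanSpace.norm_single]
      simp [mul_pow, sq_abs]
    rw [norm_add_sq_real, h1, h2, hQ]
    ring
  set ρ : ℝ → ℝ := fun t => Real.sqrt (Q t) with hρdef
  have hρ : ∀ t : ℝ, ‖v + t • e‖ = ρ t := by
    intro t
    simp only [hρdef]
    rw [← hQnorm t, Real.sqrt_sq (norm_nonneg _)]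
  have hQ0 : Q 0 = r ^ 2 := by simp [hQ]
  have hρ0 : ρ 0 = r := by
    rw [hρdef]; simp only [hQ0]; exact Real.sqrt_sq hr.le
  have hPhi : (fun t : ℝ => Phi s (x + t • e) y) = fun t => Fc s (ρ t) := by
    funext t
    rw [phi_eq_Fc]
    congr 1
    push_cast
    congr 1
    rw [← hρ t]
    congr 1
    rw [hv]
    abel
  -- derivative of ρ
  have hρpos : ∀ t : ℝ, 0 < Q t → 0 < ρ t := fun t ht => Real.sqrt_pos.2 ht
  have hρderiv : ∀ t : ℝ, 0 < Q t → HasDerivAt ρ ((a + t) / ρ t) t := by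
    intro t ht
    have hQ' : HasDerivAt Q (2 * a + 2 * t) t := by
      have h1 : HasDerivAt (fun u : ℝ => r ^ 2 + 2 * a * u) (2 * a) t := by
        simpa using ((hasDerivAt_id t).const_mul (2 * a)).const_add (r ^ 2)
      have h2 : HasDerivAt (fun u : ℝ => u ^ 2) (2 * t) t := by
        simpa using hasDerivAt_pow 2 t
      exact h1.add h2
    have hs := (Real.hasDerivAt_sqrt ht.ne').comp t hQ'
    have hρt : ρ t ≠ 0 := (hρpos t ht).ne'
    refine hs.congr_deriv ?_
    symm
    rw [hρdef]
    field_simp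
  -- derivative of Fc ∘ ρ
  set D : ℝ → ℂ := fun t => ((a + t) / ρ t) • Gc s (ρ t) with hD
  have hFρ : ∀ t : ℝ, 0 < Q t → HasDerivAt (fun u : ℝ => Fc s (ρ u)) (D t) t := by
    intro t ht
    have hρt : (ρ t : ℂ) ≠ 0 := by exact_mod_cast (hρpos t ht).ne'
    have h1 : HasDerivAt (fun u : ℝ => Fc s (u : ℂ)) (Gc s (ρ t)) (ρ t) :=
      (hasDerivAt_Fc s hρt).comp_ofReal
    exact h1.scomp t (hρderiv t ht)
  -- derivative of D at 0
  set L : ℂ := ((a / r) • ((a / r) • Hc s r)) + ((1 / r - a ^ 2 / r ^ 3) • Gc s r) with hL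
  have hρd0 : HasDerivAt ρ (a / r) 0 := by
    have := hρderiv 0 (by rw [hQ0]; positivity)
    simpa [hρ0] using this
  have hDderiv : HasDerivAt D L 0 := by
    have hφ : HasDerivAt (fun t : ℝ => (a + t) / ρ t) (1 / r - a ^ 2 / r ^ 3) 0 := by
      have h1 : HasDerivAt (fun t : ℝ => a + t) 1 0 := by
        simpa using (hasDerivAt_id (0 : ℝ)).const_add a
      have := h1.div hρd0 (by rw [hρ0]; exact hrne)
      refine this.congr_deriv ?_
      symm
      rw [hρ0]
      field_simp
      ring
    have hψ : HasDerivAt (fun t : ℝ => Gc s (ρ t)) ((a / r) • Hc s r) 0 := by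
      have h1 : HasDerivAt (fun u : ℝ => Gc s (u : ℂ)) (Hc s (ρ 0)) (ρ 0) :=
        (hasDerivAt_Gc s (by rw [hρ0]; exact_mod_cast hrne)).comp_ofReal
      have := h1.scomp 0 hρd0
      simp only [hρ0] at this ⊢
      exact this
    have := hφ.smul hψ
    rw [hD, hL]
    refine this.congr_deriv ?_
    symm
    rw [hρ0]
    simp only [add_zero]
  -- assemble
  rw [hPhi]
  rw [show (2 : ℕ) = 1 + 1 from rfl, iteratedDeriv_succ, iteratedDeriv_one]
  have hU : IsOpen {t : ℝ | 0 < Q t} := by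
    have : Continuous Q := by fun_prop
    exact isOpen_lt continuous_const this
  have h0U : (0 : ℝ) ∈ {t : ℝ | 0 < Q t} := by
    simp only [Set.mem_setOf_eq, hQ0]; positivity
  have hev : deriv (fun u : ℝ => Fc s (ρ u)) =ᶠ[nhds 0] D := by
    filter_upwards [hU.mem_nhds h0U] with t ht
    exact (hFρ t ht).deriv
  rw [hev.deriv_eq, hDderiv.deriv, hL]

/-- For `s ∈ ℂ` and `y ∈ ℝ³`, the function `u(x) = Φ_s(x,y)` is twice
continuously differentiable on `ℝ³ \ {y}` and satisfies `Δu + s²u = 0` there. -/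
theorem stmt5 (s : ℂ) (y : EuclideanSpace ℝ (Fin 3)) :
    ContDiffOn ℝ 2 (fun x => Phi s x y) {y}ᶜ ∧
    ∀ x : EuclideanSpace ℝ (Fin 3), x ≠ y →
      lap (fun x' => Phi s x' y) x + s ^ 2 * Phi s x y = 0 := by
  constructor
  · intro x hx
    apply ContDiffAt.contDiffWithinAt
    have hxy : x ≠ y := by simpa using hx
    have hne : x - y ≠ 0 := sub_ne_zero.2 hxy
    have hnorm : ContDiffAt ℝ 2 (fun x => ‖x - y‖) x :=
      ContDiffAt.norm ℝ (contDiffAt_id.sub contDiffAt_const) hne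
    have hcast : ContDiffAt ℝ 2 (fun x : EuclideanSpace ℝ (Fin 3) => ((‖x - y‖ : ℝ) : ℂ)) x :=
      Complex.ofRealCLM.contDiff.contDiffAt.comp x hnorm
    have hnum : ContDiffAt ℝ 2
        (fun x : EuclideanSpace ℝ (Fin 3) => Complex.exp (Complex.I * s * (‖x - y‖ : ℂ))) x :=
      (contDiffAt_const.mul hcast).cexp
    have hden : ContDiffAt ℝ 2
        (fun x : EuclideanSpace ℝ (Fin 3) => ((4 * Real.pi * ‖x - y‖ : ℝ) : ℂ)) x :=
      Complex.ofRealCLM.contDiff.contDiffAt.comp x (contDiffAt_const.mul hnorm)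
    have hd0 : ((4 * Real.pi * ‖x - y‖ : ℝ) : ℂ) ≠ 0 := by
      have h1 : ‖x - y‖ ≠ 0 := norm_ne_zero_iff.2 hne
      have : (4 * Real.pi * ‖x - y‖ : ℝ) ≠ 0 := by positivity
      exact_mod_cast this
    have h : ContDiffAt ℝ 2 (fun x : EuclideanSpace ℝ (Fin 3) =>
        Complex.exp (Complex.I * s * (‖x - y‖ : ℂ)) / ((4 * Real.pi * ‖x - y‖ : ℝ) : ℂ)) x :=
      by have := hnum.mul (hden.inv hd0); simp only [div_eq_mul_inv]; exact this
    simpa [Phi] using h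
  · intro x hxy
    have hne : x - y ≠ 0 := sub_ne_zero.2 hxy
    have hr : 0 < ‖x - y‖ := norm_pos_iff.2 hne
    set r : ℝ := ‖x - y‖ with hrdef
    have hrne : r ≠ 0 := hr.ne'
    have hrc : (r : ℂ) ≠ 0 := by exact_mod_cast hrne
    have hsum : ∑ i : Fin 3, ((x - y) i) ^ 2 = r ^ 2 := by
      have h1 : r ^ 2 = @inner ℝ _ _ (x - y) (x - y) := by
        rw [real_inner_self_eq_norm_sq]
      rw [h1, PiLp.inner_apply]
      simp [sq]
    have hlap : lap (fun x' => Phi s x' y) x = Hc s r + ((2 / r : ℝ)) • Gc s r := by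
      unfold lap
      rw [Finset.sum_congr rfl (fun i _ => second_deriv_line s x y hxy i)]
      have step : ∀ i : Fin 3,
          ((((x - y) i / r) • (((x - y) i / r) • Hc s r))
            + ((1 / r - ((x - y) i) ^ 2 / r ^ 3) • Gc s r))
          = ((((x - y) i : ℝ) : ℂ)) ^ 2 * (Hc s r / (r : ℂ) ^ 2 - Gc s r / (r : ℂ) ^ 3)
            + Gc s r / (r : ℂ) := by
        intro i
        simp only [Complex.real_smul]
        push_cast
        ring
      rw [Finset.sum_congr rfl (fun i _ => step i)]
      rw [Finset.sum_add_distrib, ← Finset.sum_mul, Finset.sum_const, Finset.card_univ]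
      have hsC : (∑ i : Fin 3, ((((x - y) i : ℝ) : ℂ)) ^ 2) = (r : ℂ) ^ 2 := by
        rw [← Complex.ofReal_pow, ← hsum]
        push_cast
        rfl
      rw [hsC, Complex.real_smul]
      simp only [Fintype.card_fin, nsmul_eq_mul]
      push_cast
      field_simp
      ring
    rw [hlap, phi_eq_Fc]
    exact key_identity s hr
end

section
/- Let B ⊂ ℝ³ be a bounded measurable set, let s ∈ ℂ, and let g : ℝ³ → ℂ be integrable on B. Then the volume potential v(x) = ∫_B Φ_s(x,y) g(y) dy is twice continuously differentiable on the open set ℝ³ \ closure(B) and satisfies the Helmholtz equation Δv(x) + s² v(x) = 0 for every x ∉ closure(B), where Δ denotes the Laplacian. -/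
open MeasureTheory

open Complex Metric Set Filter Function
open scoped Real Topology

local notation "E3" => EuclideanSpace ℝ (Fin 3)

noncomputable def kk (s : ℂ) (z : E3) : ℂ :=
  Complex.exp (Complex.I * s * (‖z‖ : ℂ)) / ((4 * Real.pi * ‖z‖ : ℝ) : ℂ)

noncomputable def F (s : ℂ) (r : ℝ) : ℂ :=
  Complex.exp (Complex.I * s * r) / ((4 * Real.pi * r : ℝ) : ℂ)

noncomputable def F1 (s : ℂ) (r : ℝ) : ℂ :=
  Complex.exp (Complex.I * s * r) * (Complex.I * s * r - 1) / (4 * (Real.pi : ℂ) * (r : ℂ) ^ 2)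

noncomputable def F2 (s : ℂ) (r : ℝ) : ℂ :=
  Complex.exp (Complex.I * s * r) * ((Complex.I * s * r) ^ 2 - 2 * (Complex.I * s * r) + 2) /
    (4 * (Real.pi : ℂ) * (r : ℂ) ^ 3)

lemma kk_eq_F (s : ℂ) (w : E3) : kk s w = F s ‖w‖ := rfl

lemma hasDerivAt_ofReal (r : ℝ) : HasDerivAt (fun t : ℝ => (t : ℂ)) 1 r := by
  simpa using (hasDerivAt_id r).ofReal_comp

lemma hasDerivAt_cexp_linear (s : ℂ) (r : ℝ) :
    HasDerivAt (fun t : ℝ => Complex.exp (Complex.I * s * t))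
      (Complex.exp (Complex.I * s * r) * (Complex.I * s)) r := by
  simpa using ((hasDerivAt_ofReal r).const_mul (Complex.I * s)).cexp

lemma hasDerivAt_F (s : ℂ) {r : ℝ} (hr : r ≠ 0) : HasDerivAt (F s) (F1 s r) r := by
  have hπ : (Real.pi : ℂ) ≠ 0 := Complex.ofReal_ne_zero.2 Real.pi_ne_zero
  have hrc : (r : ℂ) ≠ 0 := Complex.ofReal_ne_zero.2 hr
  have hden : HasDerivAt (fun t : ℝ => ((4 * Real.pi * t : ℝ) : ℂ)) ((4 * Real.pi : ℝ) : ℂ) r := by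
    have h : HasDerivAt (fun t : ℝ => (4 * Real.pi * t : ℝ)) (4 * Real.pi) r := by
      simpa using (hasDerivAt_id r).const_mul (4 * Real.pi)
    exact h.ofReal_comp
  have hd0 : ((4 * Real.pi * r : ℝ) : ℂ) ≠ 0 :=
    Complex.ofReal_ne_zero.2 (mul_ne_zero (mul_ne_zero (by norm_num) Real.pi_ne_zero) hr)
  have h := (hasDerivAt_cexp_linear s r).div hden hd0
  refine h.congr_deriv ?_
  unfold F1
  push_cast
  field_simp

lemma hasDerivAt_F1 (s : ℂ) {r : ℝ} (hr : r ≠ 0) : HasDerivAt (F1 s) (F2 s r) r := by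
  have hπ : (Real.pi : ℂ) ≠ 0 := Complex.ofReal_ne_zero.2 Real.pi_ne_zero
  have hrc : (r : ℂ) ≠ 0 := Complex.ofReal_ne_zero.2 hr
  have hnum : HasDerivAt
      (fun t : ℝ => Complex.exp (Complex.I * s * t) * (Complex.I * s * t - 1))
      (Complex.exp (Complex.I * s * r) * (Complex.I * s) * (Complex.I * s * r - 1) +
        Complex.exp (Complex.I * s * r) * (Complex.I * s)) r := by
    have h2 : HasDerivAt (fun t : ℝ => Complex.I * s * (t : ℂ) - 1) (Complex.I * s) r := by
      simpa using ((hasDerivAt_ofReal r).const_mul (Complex.I * s)).sub_const 1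
    exact (hasDerivAt_cexp_linear s r).mul h2
  have hden : HasDerivAt (fun t : ℝ => 4 * (Real.pi : ℂ) * (t : ℂ) ^ 2)
      (4 * (Real.pi : ℂ) * (2 * r)) r := by
    have h : HasDerivAt (fun t : ℝ => ((t : ℂ)) ^ 2) (2 * (r : ℂ)) r := by
      have := (hasDerivAt_ofReal r).mul (hasDerivAt_ofReal r)
      have hfun : (fun t : ℝ => ((t : ℂ)) ^ 2) = (fun t : ℝ => (t : ℂ)) * (fun t : ℝ => (t : ℂ)) := by
        funext t; simp [sq]
      rw [hfun]; exact this.congr_deriv (by ring)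
    simpa [mul_assoc] using h.const_mul (4 * (Real.pi : ℂ))
  have hd0 : 4 * (Real.pi : ℂ) * (r : ℂ) ^ 2 ≠ 0 := by
    apply mul_ne_zero (mul_ne_zero (by norm_num) hπ) (pow_ne_zero _ hrc)
  have h := hnum.div hden hd0
  refine h.congr_deriv ?_
  unfold F2
  field_simp
  ring

lemma norm_line (z e : E3) (he : ‖e‖ = 1) (t : ℝ) :
    ‖z + t • e‖ = Real.sqrt (‖z‖ ^ 2 + 2 * (inner ℝ z e : ℝ) * t + t ^ 2) := by
  rw [← Real.sqrt_sq (norm_nonneg (z + t • e))]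
  congr 1
  rw [norm_add_sq_real, real_inner_smul_right, norm_smul, he]
  simp [mul_pow, sq_abs]
  ring

lemma deriv2_line_kk (s : ℂ) {z : E3} (hz : z ≠ 0) (e : E3) (he : ‖e‖ = 1) :
    deriv (deriv (fun t : ℝ => kk s (z + t • e))) 0 =
      (((inner ℝ z e : ℝ) ^ 2 / ‖z‖ ^ 2 : ℝ) : ℂ) * F2 s ‖z‖ +
      (((‖z‖ ^ 2 - (inner ℝ z e : ℝ) ^ 2) / ‖z‖ ^ 3 : ℝ) : ℂ) * F1 s ‖z‖ := by
  set c : ℝ := (inner ℝ z e : ℝ) with hc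
  set r : ℝ := ‖z‖ with hrdef
  have hr : 0 < r := norm_pos_iff.2 hz
  set q : ℝ → ℝ := fun t => r ^ 2 + 2 * c * t + t ^ 2 with hq
  have hfeq : (fun t : ℝ => kk s (z + t • e)) = fun t => F s (Real.sqrt (q t)) := by
    funext t; rw [kk_eq_F, norm_line z e he t]
  have hq' : ∀ t, HasDerivAt q (2 * c + 2 * t) t := by
    intro t
    have h1 : HasDerivAt (fun t : ℝ => 2 * c * t) (2 * c) t := by
      simpa using (hasDerivAt_id t).const_mul (2 * c)
    have h2 : HasDerivAt (fun t : ℝ => t ^ 2) (2 * t) t := by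
      simpa using hasDerivAt_pow 2 t
    have h := (h1.add h2).const_add (r ^ 2)
    have hqe : q = fun x => r ^ 2 + (2 * c * x + x ^ 2) := by
      funext x; simp [hq]; ring
    rw [hqe]; exact h
  have hqcont : Continuous q := by fun_prop
  have hq0 : q 0 = r ^ 2 := by simp [hq]
  have hs0 : Real.sqrt (q 0) = r := by rw [hq0, Real.sqrt_sq hr.le]
  have hqpos : ∀ᶠ t in 𝓝 (0 : ℝ), 0 < q t := by
    have h0 : 0 < q 0 := by rw [hq0]; positivity
    exact (hqcont.tendsto 0).eventually (eventually_gt_nhds h0)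
  have hρ : ∀ t, 0 < q t → HasDerivAt (fun t => Real.sqrt (q t)) ((c + t) / Real.sqrt (q t)) t := by
    intro t ht
    have h := (Real.hasDerivAt_sqrt ht.ne').comp t (hq' t)
    have : (1 / (2 * Real.sqrt (q t))) * (2 * c + 2 * t) = (c + t) / Real.sqrt (q t) := by
      have hst : Real.sqrt (q t) ≠ 0 := (Real.sqrt_pos.2 ht).ne'
      field_simp
    rw [← this]
    exact h
  have hd1 : ∀ t, 0 < q t → HasDerivAt (fun t => F s (Real.sqrt (q t)))
      (((c + t) / Real.sqrt (q t)) • F1 s (Real.sqrt (q t))) t := by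
    intro t ht
    exact (hasDerivAt_F s (Real.sqrt_pos.2 ht).ne').scomp t (hρ t ht)
  set df : ℝ → ℂ := fun t => ((c + t) / Real.sqrt (q t)) • F1 s (Real.sqrt (q t)) with hdf
  have hev : deriv (fun t => F s (Real.sqrt (q t))) =ᶠ[𝓝 (0 : ℝ)] df :=
    hqpos.mono fun t ht => (hd1 t ht).deriv
  rw [hfeq, hev.deriv_eq]
  have hρ0 : HasDerivAt (fun t => Real.sqrt (q t)) (c / r) 0 := by
    have h := hρ 0 (by rw [hq0]; positivity)
    simpa [hs0] using h
  have hA : HasDerivAt (fun t => F1 s (Real.sqrt (q t))) ((c / r) • F2 s r) 0 := by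
    have hg : HasDerivAt (F1 s) (F2 s r) (Real.sqrt (q 0)) := by
      rw [hs0]; exact hasDerivAt_F1 s hr.ne'
    exact hg.scomp 0 hρ0
  have hB : HasDerivAt (fun t : ℝ => (c + t) / Real.sqrt (q t))
      ((1 * r - (c + 0) * (c / r)) / r ^ 2) 0 := by
    have hnum : HasDerivAt (fun t : ℝ => c + t) 1 0 := by
      simpa using (hasDerivAt_id (0 : ℝ)).const_add c
    have h := hnum.div hρ0 (by rw [hs0]; exact hr.ne')
    simp only [hs0] at h
    exact h
  have hd2 : HasDerivAt df
      (((c + 0) / Real.sqrt (q 0)) • ((c / r) • F2 s r) +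
        ((1 * r - (c + 0) * (c / r)) / r ^ 2) • F1 s (Real.sqrt (q 0))) 0 := by
    exact hB.smul hA
  rw [hd2.deriv, hs0]
  have hrc : (r : ℂ) ≠ 0 := Complex.ofReal_ne_zero.2 hr.ne'
  push_cast [Complex.real_smul]
  field_simp
  ring

lemma sum_line (s : ℂ) {z : E3} (hz : z ≠ 0) :
    ∑ i : Fin 3, deriv (deriv (fun t : ℝ => kk s (z + t • EuclideanSpace.single i (1 : ℝ)))) 0
      = -s ^ 2 * kk s z := by
  set r : ℝ := ‖z‖ with hrdef
  have hr : 0 < r := norm_pos_iff.2 hz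
  have he : ∀ i : Fin 3, ‖EuclideanSpace.single i (1 : ℝ)‖ = 1 := by
    intro i; simp
  have hinner : ∀ i : Fin 3, (inner ℝ z (EuclideanSpace.single i (1 : ℝ)) : ℝ) = z i := by
    intro i; rw [EuclideanSpace.inner_single_right]; simp
  have hsum : r ^ 2 = ∑ i : Fin 3, (z i) ^ 2 := by
    rw [hrdef, EuclideanSpace.norm_eq, Real.sq_sqrt (by positivity)]
    simp [sq_abs]
  rw [Finset.sum_congr rfl fun i _ => deriv2_line_kk s hz _ (he i)]
  simp only [hinner]
  rw [Finset.sum_add_distrib, ← Finset.sum_mul, ← Finset.sum_mul]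
  have hA : (∑ i : Fin 3, (((z i) ^ 2 / r ^ 2 : ℝ) : ℂ)) = 1 := by
    rw [← Complex.ofReal_sum, ← Finset.sum_div, ← hsum, div_self (by positivity)]
    norm_num
  have hB : (∑ i : Fin 3, (((r ^ 2 - (z i) ^ 2) / r ^ 3 : ℝ) : ℂ)) = ((2 / r : ℝ) : ℂ) := by
    rw [← Complex.ofReal_sum]
    norm_cast
    have h3 : ∑ i : Fin 3, (r ^ 2 - (z i) ^ 2) = 2 * r ^ 2 := by
      rw [Finset.sum_sub_distrib, ← hsum]
      simp
      ring
    rw [← Finset.sum_div, h3]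
    field_simp
  rw [hA, hB, kk_eq_F, ← hrdef]
  have hrc : (r : ℂ) ≠ 0 := Complex.ofReal_ne_zero.2 hr.ne'
  have hπ : (Real.pi : ℂ) ≠ 0 := Complex.ofReal_ne_zero.2 Real.pi_ne_zero
  have ha : (Complex.I * s * (r : ℂ)) ^ 2 = -(s ^ 2 * (r : ℂ) ^ 2) := by
    rw [mul_pow, mul_pow, Complex.I_sq]; ring
  unfold F F1 F2
  rw [ha]
  push_cast
  have hd1 : 4 * (Real.pi : ℂ) * (r : ℂ) ^ 3 ≠ 0 := by
    exact mul_ne_zero (mul_ne_zero (by norm_num) hπ) (pow_ne_zero _ hrc)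
  have hd2 : 4 * (Real.pi : ℂ) * (r : ℂ) ^ 2 ≠ 0 := by
    exact mul_ne_zero (mul_ne_zero (by norm_num) hπ) (pow_ne_zero _ hrc)
  have hd3 : 4 * (Real.pi : ℂ) * (r : ℂ) ≠ 0 := by
    exact mul_ne_zero (mul_ne_zero (by norm_num) hπ) hrc
  have hd4 : (r : ℂ) * (4 * (Real.pi : ℂ) * (r : ℂ) ^ 2) ≠ 0 := mul_ne_zero hrc hd2
  rw [one_mul, div_mul_div_comm, div_add_div _ _ hd1 hd4, ← mul_div_assoc,
    div_eq_div_iff (mul_ne_zero hd1 hd4) hd3]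
  ring

lemma kk_contDiffAt (s : ℂ) {z : E3} (hz : z ≠ 0) : ContDiffAt ℝ 2 (kk s) z := by
  unfold kk
  simp only [div_eq_mul_inv]
  have hn : ContDiffAt ℝ 2 (fun w : E3 => ‖w‖) z := contDiffAt_norm ℝ hz
  have hnc : ContDiffAt ℝ 2 (fun w : E3 => ((‖w‖ : ℝ) : ℂ)) z :=
    Complex.ofRealCLM.contDiff.contDiffAt.comp z hn
  have hnum : ContDiffAt ℝ 2 (fun w : E3 => Complex.exp (Complex.I * s * (‖w‖ : ℂ))) z := by
    exact ((contDiffAt_const (c := Complex.I * s)).mul hnc).cexp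
  have hden : ContDiffAt ℝ 2 (fun w : E3 => ((4 * Real.pi * ‖w‖ : ℝ) : ℂ)) z := by
    exact Complex.ofRealCLM.contDiff.contDiffAt.comp z
      ((contDiffAt_const (c := 4 * Real.pi)).mul hn)
  have hdz : ((4 * Real.pi * ‖z‖ : ℝ) : ℂ) ≠ 0 := by
    refine Complex.ofReal_ne_zero.2 ?_
    have : 0 < ‖z‖ := norm_pos_iff.2 hz
    positivity
  exact hnum.mul (hden.inv hdz)

lemma deriv2_line {u : E3 → ℂ} {u1 : E3 → E3 →L[ℝ] ℂ} {u2 : E3 → E3 →L[ℝ] E3 →L[ℝ] ℂ}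
    (h1 : ∀ x, HasFDerivAt u (u1 x) x) (h2 : ∀ x, HasFDerivAt u1 (u2 x) x) (x v : E3) :
    deriv (deriv fun t : ℝ => u (x + t • v)) 0 = u2 x v v := by
  have hline : ∀ t : ℝ, HasDerivAt (fun t : ℝ => x + t • v) v t := by
    intro t
    simpa using ((hasDerivAt_id t).smul_const v).const_add x
  have d1 : ∀ t : ℝ, HasDerivAt (fun t : ℝ => u (x + t • v)) (u1 (x + t • v) v) t :=
    fun t => (h1 _).comp_hasDerivAt t (hline t)
  have e1 : deriv (fun t : ℝ => u (x + t • v)) = fun t : ℝ => u1 (x + t • v) v :=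
    funext fun t => (d1 t).deriv
  rw [e1]
  have d2 : HasDerivAt (fun t : ℝ => u1 (x + t • v) v) (u2 x v v) 0 := by
    have h := ((ContinuousLinearMap.apply ℝ ℂ v).hasFDerivAt.comp (x + (0:ℝ) • v)
      (h2 (x + (0:ℝ) • v))).comp_hasDerivAt 0 (hline 0)
    simp only [zero_smul, add_zero] at h
    exact h
  exact d2.deriv

lemma Phi_eq (s : ℂ) (x y : E3) : Phi s x y = kk s (x - y) := rfl

lemma bound_aux2 (f : E3 → E3 →L[ℝ] E3 →L[ℝ] ℂ) (hf : HasCompactSupport f) (h : Continuous f) :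
    ∃ C, ∀ x, ‖f x‖ ≤ C :=
  @HasCompactSupport.exists_bound_of_continuous E3 (E3 →L[ℝ] E3 →L[ℝ] ℂ) _ _ f hf h

open scoped Convolution

set_option maxHeartbeats 1000000 in
theorem key (B : Set E3) (hBm : MeasurableSet B)
    (s : ℂ) (g : E3 → ℂ) (hg : Integrable g (volume.restrict B)) {x₀ : E3}
    (hx₀ : x₀ ∉ closure B) {ε R : ℝ} (hε : 0 < ε)
    (hball : Metric.ball x₀ ε ⊆ (closure B)ᶜ) (hR : B ⊆ Metric.closedBall 0 R) :
    ContDiffAt ℝ 2 (fun x => ∫ y in B, Phi s x y * g y) x₀ ∧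
      lap (fun x => ∫ y in B, Phi s x y * g y) x₀ +
        s ^ 2 * ∫ y in B, Phi s x₀ y * g y = 0 := by
  set M : ℝ := ‖x₀‖ + ε + max R 0 with hM
  have hMpos : 0 < M + 1 := by
    have := norm_nonneg x₀
    have := le_max_right R 0
    simp only [hM]; linarith
  set φin : ContDiffBump (0 : E3) := ⟨ε/4, ε/2, by linarith, by linarith⟩ with hφin
  set φout : ContDiffBump (0 : E3) := ⟨M+1, M+2, hMpos, by linarith⟩ with hφout
  set kt : E3 → ℂ := fun z => (((1 - φin z) * φout z : ℝ) : ℂ) * kk s z with hkt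
  have hfar : ∀ x ∈ Metric.ball x₀ (ε/4), ∀ y ∈ B, ε/2 < ‖x - y‖ ∧ ‖x - y‖ < M + 1 := by
    intro x hx y hy
    have h1 : ε ≤ ‖x₀ - y‖ := by
      by_contra h
      push_neg at h
      have hyb : y ∈ Metric.ball x₀ ε := by
        rw [Metric.mem_ball, dist_comm, dist_eq_norm]; exact h
      exact hball hyb (subset_closure hy)
    have hxx : ‖x - x₀‖ < ε/4 := by
      rw [Metric.mem_ball, dist_eq_norm] at hx; exact hx
    have htri : ‖x₀ - y‖ ≤ ‖x₀ - x‖ + ‖x - y‖ := by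
      simpa using norm_sub_le_norm_sub_add_norm_sub x₀ x y
    have hrev : ‖x₀ - x‖ = ‖x - x₀‖ := norm_sub_rev _ _
    have hyn : ‖y‖ ≤ max R 0 := by
      have := hR hy
      rw [Metric.mem_closedBall, dist_zero_right] at this
      exact le_trans this (le_max_left _ _)
    have hxn : ‖x‖ ≤ ‖x₀‖ + ε/4 := by
      have : ‖x‖ ≤ ‖x - x₀‖ + ‖x₀‖ := by simpa using norm_add_le (x - x₀) x₀
      linarith
    constructor
    · linarith
    · have : ‖x - y‖ ≤ ‖x‖ + ‖y‖ := norm_sub_le _ _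
      simp only [hM]
      linarith
  have hkteq : ∀ z : E3, ε/2 < ‖z‖ → ‖z‖ < M + 1 → kt z = kk s z := by
    intro z h1 h2
    have hin : φin z = 0 := φin.zero_of_le_dist (by rw [dist_zero_right]; exact le_of_lt h1)
    have hout : φout z = 1 := φout.one_of_mem_closedBall
      (by rw [Metric.mem_closedBall, dist_zero_right]; exact le_of_lt h2)
    simp [hkt, hin, hout]
  set S : Set E3 := {z : E3 | ε/2 < ‖z‖ ∧ ‖z‖ < M + 1} with hS
  have hSopen : IsOpen S :=
    (isOpen_lt continuous_const continuous_norm).inter (isOpen_lt continuous_norm continuous_const)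
  have hsm : ContDiff ℝ 2 kt := by
    rw [contDiff_iff_contDiffAt]
    intro z
    by_cases hz : ‖z‖ < ε/4
    · have hev : kt =ᶠ[nhds z] (fun _ => (0 : ℂ)) := by
        refine Filter.eventuallyEq_of_mem
          ((isOpen_lt continuous_norm continuous_const).mem_nhds hz) ?_
        intro w hw
        have hin : φin w = 1 := φin.one_of_mem_closedBall
          (by rw [Metric.mem_closedBall, dist_zero_right]; exact le_of_lt hw)
        simp [hkt, hin]
      exact contDiffAt_const.congr_of_eventuallyEq hev
    · push_neg at hz
      have hz0 : z ≠ 0 := by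
        intro h
        rw [h] at hz
        simp at hz
        linarith
      have hcoef : ContDiffAt ℝ 2 (fun z : E3 => (((1 - φin z) * φout z : ℝ) : ℂ)) z := by
        exact Complex.ofRealCLM.contDiff.contDiffAt.comp z
          (((contDiff_const.sub φin.contDiff).mul φout.contDiff).contDiffAt)
      exact hcoef.mul (kk_contDiffAt s hz0)
  have hsupp : HasCompactSupport kt := by
    apply HasCompactSupport.intro (isCompact_closedBall (0 : E3) (M+2))
    intro z hz
    have : φout z = 0 := φout.zero_of_le_dist (by
      rw [Metric.mem_closedBall, not_le] at hz
      rw [dist_zero_right]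
      rw [dist_zero_right] at hz
      exact le_of_lt hz)
    simp [hkt, this]
  set g₀ : E3 → ℂ := B.indicator g with hg₀def
  have hg₀ : Integrable g₀ volume := (integrable_indicator_iff hBm).2 hg
  have hloc : MeasureTheory.LocallyIntegrable g₀ volume := hg₀.locallyIntegrable
  set L : ℂ →L[ℝ] ℂ →L[ℝ] ℂ := ContinuousLinearMap.mul ℝ ℂ with hL
  have hveq : ∀ x ∈ Metric.ball x₀ (ε/4),
      (∫ y in B, Phi s x y * g y) = (g₀ ⋆[L, volume] kt) x := by
    intro x hx
    rw [convolution_def, ← integral_indicator hBm]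
    congr 1
    funext y
    by_cases hy : y ∈ B
    · have h := hfar x hx y hy
      rw [Set.indicator_of_mem hy, hg₀def, Set.indicator_of_mem hy, hkteq _ h.1 h.2]
      show Phi s x y * g y = g y * kk s (x - y)
      rw [Phi_eq, mul_comm]
    · simp [Set.indicator_of_notMem hy, hg₀def]
  have hx₀mem : x₀ ∈ Metric.ball x₀ (ε/4) := Metric.mem_ball_self (by linarith)
  have hconv : ContDiff ℝ 2 (g₀ ⋆[L, volume] kt) := hsupp.contDiff_convolution_right L hloc hsm
  have hvev : (fun x => ∫ y in B, Phi s x y * g y) =ᶠ[nhds x₀] (g₀ ⋆[L, volume] kt) :=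
    Filter.eventuallyEq_of_mem (Metric.ball_mem_nhds x₀ (by linarith)) hveq
  constructor
  · exact hconv.contDiffAt.congr_of_eventuallyEq hvev
  · have hsm1 : ContDiff ℝ 1 (fderiv ℝ kt) := hsm.fderiv_right (by norm_num)
    have hsupp1 : HasCompactSupport (fderiv ℝ kt) := HasCompactSupport.fderiv (𝕜 := ℝ) hsupp
    have hsupp2 : HasCompactSupport (fderiv ℝ (fderiv ℝ kt)) :=
      HasCompactSupport.fderiv (𝕜 := ℝ) hsupp1
    have hcont2 : Continuous (fderiv ℝ (fderiv ℝ kt)) := hsm1.continuous_fderiv one_ne_zero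
    have hktd1 : ∀ x, HasFDerivAt kt (fderiv ℝ kt x) x :=
      fun x => ((hsm.differentiable two_ne_zero) x).hasFDerivAt
    have hktd2 : ∀ x, HasFDerivAt (fderiv ℝ kt) (fderiv ℝ (fderiv ℝ kt) x) x :=
      fun x => ((hsm1.differentiable one_ne_zero) x).hasFDerivAt
    obtain ⟨C1, hC1⟩ := hsupp1.exists_bound_of_continuous hsm1.continuous
    obtain ⟨C2, hC2⟩ := bound_aux2 _ hsupp2 hcont2
    obtain ⟨C0, hC0⟩ := hsupp.exists_bound_of_continuous hsm.continuous
    have hline : ∀ (e y : E3) (t : ℝ), HasDerivAt (fun t : ℝ => (x₀ + t • e) - y) e t := by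
      intro e y t
      simpa using ((((hasDerivAt_id t).smul_const e).const_add x₀).sub_const y)
    have key2 : ∀ e : E3, ‖e‖ = 1 →
        deriv (deriv fun t : ℝ => ∫ y, kt ((x₀ + t • e) - y) * g₀ y) 0
          = ∫ y, fderiv ℝ (fderiv ℝ kt) (x₀ - y) e e * g₀ y := by
      intro e he
      have hm0 : ∀ t : ℝ, AEStronglyMeasurable (fun y => kt ((x₀ + t • e) - y) * g₀ y) volume :=
        fun t => ((hsm.continuous.comp (continuous_const.sub continuous_id)).aestronglyMeasurable).mul
          hg₀.aestronglyMeasurable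
      have hm1 : ∀ t : ℝ, AEStronglyMeasurable
          (fun y => fderiv ℝ kt ((x₀ + t • e) - y) e * g₀ y) volume :=
        fun t => (((hsm1.continuous.comp (continuous_const.sub continuous_id)).clm_apply
          continuous_const).aestronglyMeasurable).mul hg₀.aestronglyMeasurable
      have hm2 : ∀ t : ℝ, AEStronglyMeasurable
          (fun y => fderiv ℝ (fderiv ℝ kt) ((x₀ + t • e) - y) e e * g₀ y) volume :=
        fun t => ((((hcont2.comp (continuous_const.sub continuous_id)).clm_apply
          continuous_const).clm_apply continuous_const).aestronglyMeasurable).mul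
          hg₀.aestronglyMeasurable
      have hi0 : ∀ t : ℝ, Integrable (fun y => kt ((x₀ + t • e) - y) * g₀ y) volume :=
        fun t => hg₀.bdd_mul (c := C0) ((hsm.continuous.comp
          (continuous_const.sub continuous_id)).aestronglyMeasurable) (Filter.Eventually.of_forall fun y => hC0 _)
      have hb1 : ∀ (t : ℝ) (y : E3), ‖fderiv ℝ kt ((x₀ + t • e) - y) e * g₀ y‖ ≤ C1 * ‖g₀ y‖ := by
        intro t y
        rw [norm_mul]
        refine mul_le_mul_of_nonneg_right ?_ (norm_nonneg _)
        calc ‖fderiv ℝ kt ((x₀ + t • e) - y) e‖ ≤ ‖fderiv ℝ kt ((x₀ + t • e) - y)‖ * ‖e‖ :=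
              (fderiv ℝ kt _).le_opNorm e
          _ = ‖fderiv ℝ kt ((x₀ + t • e) - y)‖ := by rw [he, mul_one]
          _ ≤ C1 := hC1 _
      have hb2 : ∀ (t : ℝ) (y : E3),
          ‖fderiv ℝ (fderiv ℝ kt) ((x₀ + t • e) - y) e e * g₀ y‖ ≤ C2 * ‖g₀ y‖ := by
        intro t y
        rw [norm_mul]
        refine mul_le_mul_of_nonneg_right ?_ (norm_nonneg _)
        calc ‖fderiv ℝ (fderiv ℝ kt) ((x₀ + t • e) - y) e e‖
            ≤ ‖fderiv ℝ (fderiv ℝ kt) ((x₀ + t • e) - y) e‖ * ‖e‖ :=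
              (fderiv ℝ (fderiv ℝ kt) _ e).le_opNorm e
          _ ≤ (‖fderiv ℝ (fderiv ℝ kt) ((x₀ + t • e) - y)‖ * ‖e‖) * ‖e‖ := by
              gcongr
              exact (fderiv ℝ (fderiv ℝ kt) _).le_opNorm e
          _ = ‖fderiv ℝ (fderiv ℝ kt) ((x₀ + t • e) - y)‖ := by rw [he, mul_one, mul_one]
          _ ≤ C2 := hC2 _
      have hi1 : ∀ t : ℝ, Integrable (fun y => fderiv ℝ kt ((x₀ + t • e) - y) e * g₀ y) volume := by
        intro t
        refine hg₀.bdd_mul (c := C1) (((hsm1.continuous.comp (continuous_const.sub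
          continuous_id)).clm_apply continuous_const).aestronglyMeasurable) (Filter.Eventually.of_forall fun y => ?_)
        calc ‖fderiv ℝ kt ((x₀ + t • e) - y) e‖ ≤ ‖fderiv ℝ kt ((x₀ + t • e) - y)‖ * ‖e‖ :=
              (fderiv ℝ kt _).le_opNorm e
          _ = ‖fderiv ℝ kt ((x₀ + t • e) - y)‖ := by rw [he, mul_one]
          _ ≤ C1 := hC1 _
      have hD0 : ∀ (y : E3) (t : ℝ), HasDerivAt (fun t => kt ((x₀ + t • e) - y) * g₀ y)
          (fderiv ℝ kt ((x₀ + t • e) - y) e * g₀ y) t :=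
        fun y t => ((hktd1 _).comp_hasDerivAt t (hline e y t)).mul_const (g₀ y)
      have hD1 : ∀ (y : E3) (t : ℝ),
          HasDerivAt (fun t => fderiv ℝ kt ((x₀ + t • e) - y) e * g₀ y)
            (fderiv ℝ (fderiv ℝ kt) ((x₀ + t • e) - y) e e * g₀ y) t := by
        intro y t
        have h := ((ContinuousLinearMap.apply ℝ ℂ e).hasFDerivAt.comp ((x₀ + t • e) - y)
          (hktd2 ((x₀ + t • e) - y))).comp_hasDerivAt t (hline e y t)
        exact h.mul_const (g₀ y)
      have hW1 : ∀ t₀ : ℝ, HasDerivAt (fun t => ∫ y, kt ((x₀ + t • e) - y) * g₀ y)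
          (∫ y, fderiv ℝ kt ((x₀ + t₀ • e) - y) e * g₀ y) t₀ := by
        intro t₀
        exact (hasDerivAt_integral_of_dominated_loc_of_deriv_le (s := Set.univ) Filter.univ_mem
          (Filter.Eventually.of_forall fun t => hm0 t) (hi0 t₀) (hm1 t₀)
          (Filter.Eventually.of_forall fun y t _ => hb1 t y) ((hg₀.norm.const_mul C1))
          (Filter.Eventually.of_forall fun y t _ => hD0 y t)).2
      have hW2 : HasDerivAt (fun t : ℝ => ∫ y, fderiv ℝ kt ((x₀ + t • e) - y) e * g₀ y)
          (∫ y, fderiv ℝ (fderiv ℝ kt) ((x₀ + (0:ℝ) • e) - y) e e * g₀ y) (0 : ℝ) := by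
        exact (hasDerivAt_integral_of_dominated_loc_of_deriv_le (s := Set.univ) Filter.univ_mem
          (Filter.Eventually.of_forall fun t => hm1 t) (hi1 0) (hm2 0)
          (Filter.Eventually.of_forall fun y t _ => hb2 t y) ((hg₀.norm.const_mul C2))
          (Filter.Eventually.of_forall fun y t _ => hD1 y t)).2
      have e1 : deriv (fun t : ℝ => ∫ y, kt ((x₀ + t • e) - y) * g₀ y)
          = fun t₀ => ∫ y, fderiv ℝ kt ((x₀ + t₀ • e) - y) e * g₀ y :=
        funext fun t => (hW1 t).deriv
      rw [e1, hW2.deriv]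
      simp
    have hptwise : ∀ y : E3,
        (∑ i : Fin 3, fderiv ℝ (fderiv ℝ kt) (x₀ - y) (EuclideanSpace.single i (1:ℝ))
          (EuclideanSpace.single i (1:ℝ)) * g₀ y)
          = -s^2 * (kt (x₀ - y) * g₀ y) := by
      intro y
      by_cases hy : y ∈ B
      · have hzS : (x₀ - y) ∈ S := by
          have h := hfar x₀ hx₀mem y hy
          exact ⟨h.1, h.2⟩
        have hz0 : (x₀ - y) ≠ 0 := by
          have h : (0:ℝ) < ‖x₀ - y‖ := lt_trans (by linarith) hzS.1
          exact norm_pos_iff.1 h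
        have hkt2line : ∀ i : Fin 3,
            fderiv ℝ (fderiv ℝ kt) (x₀ - y) (EuclideanSpace.single i (1:ℝ))
              (EuclideanSpace.single i (1:ℝ))
              = deriv (deriv fun t : ℝ =>
                  kk s ((x₀ - y) + t • EuclideanSpace.single i (1:ℝ))) 0 := by
          intro i
          rw [← deriv2_line hktd1 hktd2 (x₀ - y) (EuclideanSpace.single i (1:ℝ))]
          have hcontline : Continuous
              (fun t : ℝ => (x₀ - y) + t • EuclideanSpace.single i (1:ℝ)) := by
            fun_prop
          have hmemS : ∀ᶠ t in nhds (0:ℝ),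
              ((x₀ - y) + t • EuclideanSpace.single i (1:ℝ)) ∈ S :=
            (hcontline.tendsto 0).eventually (hSopen.mem_nhds (by simpa using hzS))
          have hev : (fun t : ℝ => kt ((x₀ - y) + t • EuclideanSpace.single i (1:ℝ)))
              =ᶠ[nhds (0:ℝ)]
                (fun t => kk s ((x₀ - y) + t • EuclideanSpace.single i (1:ℝ))) :=
            hmemS.mono fun t ht => hkteq _ ht.1 ht.2
          exact hev.deriv.deriv_eq
        rw [← Finset.sum_mul, Finset.sum_congr rfl fun i _ => hkt2line i, sum_line s hz0,
          hkteq _ hzS.1 hzS.2]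
        ring
      · simp [hg₀def, Set.indicator_of_notMem hy]
    have hi2 : ∀ i : Fin 3, Integrable (fun y =>
        fderiv ℝ (fderiv ℝ kt) (x₀ - y) (EuclideanSpace.single i (1:ℝ))
          (EuclideanSpace.single i (1:ℝ)) * g₀ y) volume := by
      intro i
      have hE : ‖EuclideanSpace.single i (1:ℝ)‖ = 1 := by simp
      refine hg₀.bdd_mul (c := C2) ((((hcont2.comp (continuous_const.sub continuous_id)).clm_apply
        continuous_const).clm_apply continuous_const).aestronglyMeasurable) (Filter.Eventually.of_forall fun y => ?_)
      calc ‖fderiv ℝ (fderiv ℝ kt) (x₀ - y) (EuclideanSpace.single i (1:ℝ))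
            (EuclideanSpace.single i (1:ℝ))‖
          ≤ ‖fderiv ℝ (fderiv ℝ kt) (x₀ - y) (EuclideanSpace.single i (1:ℝ))‖ *
            ‖EuclideanSpace.single i (1:ℝ)‖ :=
            (fderiv ℝ (fderiv ℝ kt) _ _).le_opNorm _
        _ ≤ (‖fderiv ℝ (fderiv ℝ kt) (x₀ - y)‖ * ‖EuclideanSpace.single i (1:ℝ)‖) *
            ‖EuclideanSpace.single i (1:ℝ)‖ := by
            gcongr
            exact (fderiv ℝ (fderiv ℝ kt) _).le_opNorm _
        _ = ‖fderiv ℝ (fderiv ℝ kt) (x₀ - y)‖ := by rw [hE, mul_one, mul_one]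
        _ ≤ C2 := hC2 _
    have hlineeq : ∀ i : Fin 3,
        iteratedDeriv 2 (fun t : ℝ => (fun x => ∫ y in B, Phi s x y * g y)
          (x₀ + t • EuclideanSpace.single i (1:ℝ))) 0
          = deriv (deriv fun t : ℝ =>
              ∫ y, kt ((x₀ + t • EuclideanSpace.single i (1:ℝ)) - y) * g₀ y) 0 := by
      intro i
      rw [show (2:ℕ) = 1 + 1 from rfl, iteratedDeriv_succ, iteratedDeriv_one]
      have hcontline : Continuous (fun t : ℝ => x₀ + t • EuclideanSpace.single i (1:ℝ)) := by
        fun_prop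
      have hmem : ∀ᶠ t in nhds (0:ℝ),
          (x₀ + t • EuclideanSpace.single i (1:ℝ)) ∈ Metric.ball x₀ (ε/4) :=
        (hcontline.tendsto 0).eventually (Metric.isOpen_ball.mem_nhds (by simpa using hx₀mem))
      have hev : (fun t : ℝ => ∫ y in B, Phi s (x₀ + t • EuclideanSpace.single i (1:ℝ)) y * g y)
          =ᶠ[nhds (0:ℝ)]
            (fun t => ∫ y, kt ((x₀ + t • EuclideanSpace.single i (1:ℝ)) - y) * g₀ y) := by
        refine hmem.mono fun t ht => ?_
        dsimp only
        rw [hveq _ ht, convolution_def]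
        congr 1
        funext y
        exact mul_comm (g₀ y) (kt _)
      exact hev.deriv.deriv_eq
    have hlap : lap (fun x => ∫ y in B, Phi s x y * g y) x₀
        = -s^2 * ∫ y in B, Phi s x₀ y * g y := by
      unfold lap
      rw [Finset.sum_congr rfl fun i _ => hlineeq i]
      rw [Finset.sum_congr rfl fun i _ => key2 _ (by simp)]
      rw [← integral_finset_sum _ (fun i _ => hi2 i)]
      rw [show (fun y => ∑ i : Fin 3, fderiv ℝ (fderiv ℝ kt) (x₀ - y)
          (EuclideanSpace.single i (1:ℝ)) (EuclideanSpace.single i (1:ℝ)) * g₀ y)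
          = fun y => -s^2 * (kt (x₀ - y) * g₀ y) from funext hptwise]
      rw [integral_const_mul]
      congr 1
      rw [hveq x₀ hx₀mem, convolution_def]
      congr 1
      funext y
      exact mul_comm (kt _) (g₀ y)
    rw [hlap]
    ring

/-- If `B ⊂ ℝ³` is bounded and measurable and `g` is integrable on `B`, then the
volume potential `v(x) = ∫_B Φ_s(x,y) g(y) dy` is twice continuously differentiable on
`ℝ³ \ closure(B)` and satisfies `Δv + s²v = 0` there. -/
theorem stmt6 (B : Set (EuclideanSpace ℝ (Fin 3)))
    (hBb : Bornology.IsBounded B) (hBm : MeasurableSet B)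
    (s : ℂ) (g : EuclideanSpace ℝ (Fin 3) → ℂ)
    (hg : Integrable g (volume.restrict B)) :
    ContDiffOn ℝ 2 (fun x => ∫ y in B, Phi s x y * g y) (closure B)ᶜ ∧
    ∀ x : EuclideanSpace ℝ (Fin 3), x ∉ closure B →
      lap (fun x' => ∫ y in B, Phi s x' y * g y) x + s ^ 2 * ∫ y in B, Phi s x y * g y = 0 := by
  obtain ⟨R, hR⟩ := hBb.subset_closedBall (0 : EuclideanSpace ℝ (Fin 3))
  have hkey : ∀ x₀, x₀ ∉ closure B →
      ContDiffAt ℝ 2 (fun x => ∫ y in B, Phi s x y * g y) x₀ ∧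
        lap (fun x => ∫ y in B, Phi s x y * g y) x₀ +
          s ^ 2 * ∫ y in B, Phi s x₀ y * g y = 0 := by
    intro x₀ hx₀
    obtain ⟨ε, hε, hball⟩ := Metric.isOpen_iff.1 isClosed_closure.isOpen_compl x₀ hx₀
    exact key B hBm s g hg hx₀ hε hball hR
  exact ⟨fun x hx => ((hkey x hx).1).contDiffWithinAt, fun x hx => (hkey x hx).2⟩
end

section
/- Let U ⊆ ℝ³ be an open set and a ∈ ℂ. Let v : ℝ³ → ℂ be twice continuously differentiable with compact support contained in U, and let g : ℝ³ → ℂ be twice continuously differentiable on U and square-integrable on U. Assume that Δv(x) + a·v(x) = −g(x) for all x ∈ U and that Δg(x) + conj(a)·g(x) = 0 for all x ∈ U. Then g vanishes identically on U. (Taking the L²(U) inner product of Δv + a v = −g with the conjugate of g and integrating by parts twice gives −∫_U |g|² = ∫_U v·(Δḡ + a ḡ) = 0.) -/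
open MeasureTheory

namespace Stmt7Aux

open Set Function Filter Topology Manifold

noncomputable abbrev ee (i : Fin 3) : EuclideanSpace ℝ (Fin 3) := EuclideanSpace.single i (1 : ℝ)

/-- `i`-th partial derivative. -/
noncomputable def Dp (i : Fin 3) (u : EuclideanSpace ℝ (Fin 3) → ℂ)
    (x : EuclideanSpace ℝ (Fin 3)) : ℂ :=
  fderiv ℝ u x (ee i)

lemma contDiffAt_Dp {n : ℕ∞} {i : Fin 3} {u : EuclideanSpace ℝ (Fin 3) → ℂ}
    {x : EuclideanSpace ℝ (Fin 3)} (hu : ContDiffAt ℝ (n + 1) u x) :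
    ContDiffAt ℝ n (Dp i u) x := by
  have h1 : ContDiffAt ℝ n (fderiv ℝ u) x := hu.fderiv_right le_rfl
  exact ((ContinuousLinearMap.apply ℝ ℂ (ee i)).contDiff.contDiffAt).comp x h1

lemma contDiff_Dp {n : ℕ∞} {i : Fin 3} {u : EuclideanSpace ℝ (Fin 3) → ℂ}
    (hu : ContDiff ℝ (n + 1) u) : ContDiff ℝ n (Dp i u) := by
  rw [contDiff_iff_contDiffAt] at hu ⊢
  exact fun x => contDiffAt_Dp (hu x)

lemma continuous_Dp {i : Fin 3} {u : EuclideanSpace ℝ (Fin 3) → ℂ}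
    (hu : ContDiff ℝ 1 u) : Continuous (Dp i u) := by
  have : ContDiff ℝ (0 + 1 : ℕ∞) u := by norm_num; exact hu
  simpa [contDiff_zero] using contDiff_Dp (n := 0) this

lemma hcs_Dp {i : Fin 3} {u : EuclideanSpace ℝ (Fin 3) → ℂ} (hu : HasCompactSupport u) :
    HasCompactSupport (Dp i u) :=
  hu.fderiv_apply ℝ (ee i)

/-- `lap` in terms of iterated partial derivatives, at points of `C²`-smoothness. -/
lemma lap_eq {u : EuclideanSpace ℝ (Fin 3) → ℂ} {x : EuclideanSpace ℝ (Fin 3)}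
    (hu : ContDiffAt ℝ 2 u x) :
    lap u x = ∑ i : Fin 3, Dp i (Dp i u) x := by
  unfold lap
  refine Finset.sum_congr rfl fun i _ => ?_
  obtain ⟨V, hVmem, hV⟩ := hu.contDiffOn le_rfl (by norm_num)
  set V' := interior V with hV'def
  have hV'open : IsOpen V' := isOpen_interior
  have hxV' : x ∈ V' := mem_interior_iff_mem_nhds.mpr hVmem
  have hV'C : ContDiffOn ℝ 2 u V' := hV.mono interior_subset
  set ℓ : ℝ → EuclideanSpace ℝ (Fin 3) := fun t => x + t • ee i with hℓdef
  have hℓ : ∀ t, HasDerivAt ℓ (ee i) t := by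
    intro t
    have h1 : HasDerivAt (fun s : ℝ => s • ee i) ((1 : ℝ) • ee i) t :=
      (hasDerivAt_id t).smul_const (ee i)
    simpa only [one_smul] using h1.const_add x
  have hℓ0 : ℓ 0 = x := by simp [hℓdef]
  have hℓcont : Continuous ℓ := by
    have := (continuous_id.smul continuous_const : Continuous fun t : ℝ => t • ee i)
    exact continuous_const.add this
  set T : Set ℝ := ℓ ⁻¹' V' with hTdef
  have hTopen : IsOpen T := hV'open.preimage hℓcont
  have h0T : (0 : ℝ) ∈ T := by simp [hTdef, hℓ0, hxV']
  have hder : ∀ t ∈ T, HasDerivAt (fun s => u (ℓ s)) (Dp i u (ℓ t)) t := by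
    intro t ht
    have hdiff : DifferentiableAt ℝ u (ℓ t) :=
      (hV'C.contDiffAt (hV'open.mem_nhds ht)).differentiableAt (by norm_num)
    exact hdiff.hasFDerivAt.comp_hasDerivAt t (hℓ t)
  have hev : deriv (fun t => u (ℓ t)) =ᶠ[𝓝 0] fun t => Dp i u (ℓ t) := by
    filter_upwards [hTopen.mem_nhds h0T] with t ht
    exact (hder t ht).deriv
  have h2 : iteratedDeriv 2 (fun t : ℝ => u (x + t • EuclideanSpace.single i (1:ℝ))) 0
      = deriv (deriv fun t => u (ℓ t)) 0 := by
    rw [show (2 : ℕ) = 1 + 1 from rfl, iteratedDeriv_succ, iteratedDeriv_one]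
  rw [h2, hev.deriv_eq]
  have hD : DifferentiableAt ℝ (Dp i u) x := by
    have : ContDiffAt ℝ (1 + 1 : ℕ∞) u x := by norm_num; exact hu
    exact (contDiffAt_Dp (n := 1) this).differentiableAt (by norm_num)
  have hfinal : HasDerivAt (fun t => Dp i u (ℓ t)) (Dp i (Dp i u) x) 0 := by
    have h0 : HasFDerivAt (Dp i u) (fderiv ℝ (Dp i u) x) (ℓ 0) := hℓ0 ▸ hD.hasFDerivAt
    exact h0.comp_hasDerivAt 0 (hℓ 0)
  exact hfinal.deriv

lemma Dp_congr_on {u w : EuclideanSpace ℝ (Fin 3) → ℂ} {S : Set (EuclideanSpace ℝ (Fin 3))}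
    (hS : IsOpen S) (h : ∀ y ∈ S, u y = w y) (i : Fin 3) :
    ∀ y ∈ S, Dp i u y = Dp i w y := by
  intro y hy
  have hev : u =ᶠ[𝓝 y] w := eventually_of_mem (hS.mem_nhds hy) h
  simp only [Dp, hev.fderiv_eq]

lemma Dp_zero_of_nmem {u : EuclideanSpace ℝ (Fin 3) → ℂ} {x : EuclideanSpace ℝ (Fin 3)}
    (h : x ∉ tsupport u) (i : Fin 3) : Dp i u x = 0 := by
  have hev : u =ᶠ[𝓝 x] 0 := notMem_tsupport_iff_eventuallyEq.mp h
  have : fderiv ℝ u x = fderiv ℝ (fun _ => (0 : ℂ)) x := hev.fderiv_eq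
  simp only [Dp, this, fderiv_const]
  simp

lemma DpDp_zero_of_nmem {u : EuclideanSpace ℝ (Fin 3) → ℂ} {x : EuclideanSpace ℝ (Fin 3)}
    (h : x ∉ tsupport u) (i : Fin 3) : Dp i (Dp i u) x = 0 := by
  have hop : IsOpen (tsupport u)ᶜ := (isClosed_tsupport u).isOpen_compl
  have h1 : ∀ y ∈ (tsupport u)ᶜ, Dp i u y = (fun _ => (0 : ℂ)) y :=
    fun y hy => Dp_zero_of_nmem hy i
  have h2 := Dp_congr_on hop h1 i x h
  rw [h2]
  simp only [Dp, fderiv_const]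
  simp

lemma Dp_conj (u : EuclideanSpace ℝ (Fin 3) → ℂ) (i : Fin 3) (x : EuclideanSpace ℝ (Fin 3)) :
    Dp i (fun y => (starRingEnd ℂ) (u y)) x = (starRingEnd ℂ) (Dp i u x) := by
  have h1 : (fun y => (starRingEnd ℂ) (u y)) = ⇑Complex.conjCLE ∘ u := by
    funext y; simp [Complex.conjCLE_apply]
  simp only [Dp, h1, ContinuousLinearEquiv.comp_fderiv]
  simp [Complex.conjCLE_apply]

/-- Divergence-type lemma on the pi type. -/
lemma integral_fderiv_pi (G : (Fin 3 → ℝ) → ℂ) (hG : ContDiff ℝ 1 G)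
    (hGc : HasCompactSupport G) (i : Fin 3) :
    ∫ x : Fin 3 → ℝ, fderiv ℝ G x (Pi.single i 1) = 0 := by
  classical
  obtain ⟨R, hR0, hR⟩ : ∃ R, 0 < R ∧ tsupport G ⊆ Metric.ball 0 R := by
    rcases hGc.isCompact.isBounded.subset_ball_lt 0 0 with ⟨R, hR0, hsub⟩
    exact ⟨R, hR0, hsub⟩
  have key : ∀ z : Fin 3 → ℝ, ∀ j : Fin 3, R ≤ |z j| → G z = 0 := by
    intro z j hz
    apply image_eq_zero_of_notMem_tsupport
    intro hmem
    have h1 : dist z 0 < R := Metric.mem_ball.mp (hR hmem)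
    have h2 : dist (z j) ((0 : Fin 3 → ℝ) j) ≤ dist z 0 := dist_le_pi_dist z 0 j
    simp only [Pi.zero_apply, dist_zero_right, Real.norm_eq_abs] at h1 h2
    linarith
  set A : Fin 3 → ℝ := fun _ => -R with hA
  set B : Fin 3 → ℝ := fun _ => R with hB
  have hle : A ≤ B := fun j => by simp [hA, hB]; linarith
  set f : Fin 3 → (Fin 3 → ℝ) → ℂ := fun j x => if j = i then G x else 0 with hf
  set f' : Fin 3 → (Fin 3 → ℝ) → (Fin 3 → ℝ) →L[ℝ] ℂ :=
    fun j x => if j = i then fderiv ℝ G x else 0 with hf'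
  have hsum : ∀ x : Fin 3 → ℝ, (∑ j : Fin 3, f' j x (Pi.single j 1))
      = fderiv ℝ G x (Pi.single i 1) := by
    intro x
    have : ∀ j : Fin 3, f' j x (Pi.single j 1)
        = if j = i then fderiv ℝ G x (Pi.single j 1) else 0 := by
      intro j
      by_cases hj : j = i <;> simp [hf', hj]
    simp only [this]
    rw [Finset.sum_ite_eq' Finset.univ i (fun j => fderiv ℝ G x (Pi.single j 1))]
    simp
  have hcontD : Continuous fun x => fderiv ℝ G x (Pi.single i 1) :=
    (ContinuousLinearMap.apply ℝ ℂ (Pi.single i 1)).continuous.comp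
      (hG.continuous_fderiv one_ne_zero)
  have hdiv := MeasureTheory.integral_divergence_of_hasFDerivAt_off_countable' A B hle
      f f' ∅ Set.countable_empty
      (by
        intro j
        by_cases hj : j = i
        · subst hj; simpa [hf] using hG.continuous.continuousOn
        · simp only [hf, if_neg hj]; exact continuousOn_const)
      (by
        intro x _ j
        by_cases hj : j = i
        · subst hj
          simpa [hf, hf'] using ((hG.differentiable one_ne_zero) x).hasFDerivAt
        · simp only [hf, hf', if_neg hj]; exact hasFDerivAt_const 0 x)
      (by
        rw [show (fun x => ∑ j : Fin 3, f' j x (Pi.single j 1))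
          = fun x => fderiv ℝ G x (Pi.single i 1) from funext hsum]
        exact hcontD.continuousOn.integrableOn_compact isCompact_Icc)
  have hRHS : (∑ j : Fin 3,
      ((∫ x in Icc (A ∘ Fin.succAbove j) (B ∘ Fin.succAbove j),
          f j (Fin.insertNth j (B j) x)) -
        ∫ x in Icc (A ∘ Fin.succAbove j) (B ∘ Fin.succAbove j),
          f j (Fin.insertNth j (A j) x))) = 0 := by
    apply Finset.sum_eq_zero
    intro j _
    by_cases hj : j = i
    · subst hj
      have hzB : ∀ y : Fin 2 → ℝ, G (Fin.insertNth (α := fun _ => ℝ) j R y) = 0 := by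
        intro y
        apply key _ j
        rw [Fin.insertNth_apply_same, abs_of_pos hR0]
      have hzA : ∀ y : Fin 2 → ℝ, G (Fin.insertNth (α := fun _ => ℝ) j (-R) y) = 0 := by
        intro y
        apply key _ j
        rw [Fin.insertNth_apply_same, abs_neg, abs_of_pos hR0]
      simp [hf, hA, hB, hzA, hzB]
    · simp [hf, hj]
  rw [show (fun x => ∑ j : Fin 3, f' j x (Pi.single j 1))
      = fun x => fderiv ℝ G x (Pi.single i 1) from funext hsum, hRHS] at hdiv
  rw [← MeasureTheory.setIntegral_eq_integral_of_forall_compl_eq_zero (s := Icc A B)]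
  · exact hdiv
  · intro x hx
    have : ∃ j : Fin 3, R ≤ |x j| := by
      by_contra hcon
      push_neg at hcon
      apply hx
      rw [Set.mem_Icc]
      constructor <;> intro j
      · have := hcon j; simp [hA]; cases abs_lt.mp (hcon j); linarith
      · have := hcon j; simp [hB]; cases abs_lt.mp (hcon j); linarith
    obtain ⟨j, hj⟩ := this
    have hnm : x ∉ tsupport G := by
      intro hmem
      have h1 : dist x 0 < R := Metric.mem_ball.mp (hR hmem)
      have h2 : dist (x j) ((0 : Fin 3 → ℝ) j) ≤ dist x 0 := dist_le_pi_dist x 0 j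
      simp only [Pi.zero_apply, dist_zero_right, Real.norm_eq_abs] at h1 h2
      linarith
    have hev : G =ᶠ[𝓝 x] 0 := notMem_tsupport_iff_eventuallyEq.mp hnm
    have : fderiv ℝ G x = fderiv ℝ (fun _ => (0 : ℂ)) x := hev.fderiv_eq
    rw [this]
    simp

/-- Integral of a partial derivative of a `C¹` compactly supported function vanishes. -/
lemma integral_Dp (F : EuclideanSpace ℝ (Fin 3) → ℂ) (hF : ContDiff ℝ 1 F)
    (hFc : HasCompactSupport F) (i : Fin 3) :
    ∫ x, Dp i F x = 0 := by
  classical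
  set L : EuclideanSpace ℝ (Fin 3) ≃L[ℝ] (Fin 3 → ℝ) := EuclideanSpace.equiv (Fin 3) ℝ with hL
  set G : (Fin 3 → ℝ) → ℂ := F ∘ L.symm with hGdef
  have hG : ContDiff ℝ 1 G := hF.comp L.symm.contDiff
  have hGc : HasCompactSupport G := hFc.comp_homeomorph L.symm.toHomeomorph
  have hfd : ∀ y : Fin 3 → ℝ, fderiv ℝ G y (Pi.single i 1) = Dp i F (L.symm y) := by
    intro y
    have h1 : HasFDerivAt G ((fderiv ℝ F (L.symm y)).comp (L.symm : (Fin 3 → ℝ) →L[ℝ] _)) y :=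
      ((hF.differentiable one_ne_zero) (L.symm y)).hasFDerivAt.comp y L.symm.hasFDerivAt
    rw [h1.fderiv]
    simp only [ContinuousLinearMap.comp_apply, Dp]
    congr 1
  have hmp := (EuclideanSpace.volume_preserving_symm_measurableEquiv_toLp (Fin 3)).symm
  have hcoe : ∀ y : Fin 3 → ℝ, (MeasurableEquiv.toLp 2 (Fin 3 → ℝ)) y = L.symm y := by
    intro y; rfl
  calc ∫ x, Dp i F x
      = ∫ y : Fin 3 → ℝ, Dp i F ((MeasurableEquiv.toLp 2 (Fin 3 → ℝ)) y) :=
        (hmp.integral_comp (MeasurableEquiv.toLp 2 (Fin 3 → ℝ)).measurableEmbedding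
          fun x => Dp i F x).symm
    _ = ∫ y : Fin 3 → ℝ, fderiv ℝ G y (Pi.single i 1) := by
        refine integral_congr_ae (Filter.Eventually.of_forall fun y => ?_)
        show Dp i F ((MeasurableEquiv.toLp 2 (Fin 3 → ℝ)) y)
          = fderiv ℝ G y (Pi.single i 1)
        rw [hfd y, hcoe y]
    _ = 0 := integral_fderiv_pi G hG hGc i

/-- Integration by parts. -/
lemma byparts (i : Fin 3) (P Q : EuclideanSpace ℝ (Fin 3) → ℂ)
    (hP : ContDiff ℝ 1 P) (hQ : ContDiff ℝ 1 Q) (hPc : HasCompactSupport P) :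
    ∫ x, Dp i P x * Q x = -∫ x, P x * Dp i Q x := by
  have hPQ : ContDiff ℝ 1 fun x => P x * Q x := hP.mul hQ
  have hPQc : HasCompactSupport fun x => P x * Q x := hPc.mul_right
  have h0 := integral_Dp _ hPQ hPQc i
  have hd : (fun x => Dp i (fun y => P y * Q y) x)
      = fun x => Dp i P x * Q x + P x * Dp i Q x := by
    funext x
    have hp := (hP.differentiable one_ne_zero) x
    have hq := (hQ.differentiable one_ne_zero) x
    simp only [Dp]
    rw [fderiv_fun_mul hp hq]
    simp only [ContinuousLinearMap.add_apply, ContinuousLinearMap.smul_apply, smul_eq_mul]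
    ring
  rw [hd] at h0
  have hint1 : Integrable fun x => Dp i P x * Q x := by
    apply Continuous.integrable_of_hasCompactSupport
    · exact (continuous_Dp hP).mul hQ.continuous
    · exact (hcs_Dp hPc).mul_right
  have hint2 : Integrable fun x => P x * Dp i Q x := by
    apply Continuous.integrable_of_hasCompactSupport
    · exact hP.continuous.mul (continuous_Dp hQ)
    · exact hPc.mul_right
  rw [integral_add hint1 hint2] at h0
  linear_combination h0

end Stmt7Aux

open Stmt7Aux Set Function Filter Topology Manifold

/-- Let `U ⊆ ℝ³` be open and `a ∈ ℂ`. If `v` is `C²` with compact support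
contained in `U`, `g` is `C²` on `U` and square-integrable on `U`, `Δv + a v = −g` on `U` and
`Δg + conj(a) g = 0` on `U`, then `g ≡ 0` on `U`. -/
theorem stmt7 (U : Set (EuclideanSpace ℝ (Fin 3))) (hU : IsOpen U) (a : ℂ)
    (v g : EuclideanSpace ℝ (Fin 3) → ℂ)
    (hv : ContDiff ℝ 2 v) (hvc : HasCompactSupport v) (hvU : tsupport v ⊆ U)
    (hg : ContDiffOn ℝ 2 g U) (hgL2 : MemLp g 2 (volume.restrict U))
    (heq1 : ∀ x ∈ U, lap v x + a * v x = -g x)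
    (heq2 : ∀ x ∈ U, lap g x + (starRingEnd ℂ) a * g x = 0) :
    ∀ x ∈ U, g x = 0 := by
  classical
  -- compact set L between tsupport v and U
  obtain ⟨L, hLc, hvL, hLU⟩ := exists_compact_between hvc hU hvU
  -- smooth cutoff
  obtain ⟨χ₀, hχ1, hχ0, hχmem⟩ :=
    exists_contMDiffMap_one_nhds_of_subset_interior (n := 2) (𝓘(ℝ, EuclideanSpace ℝ (Fin 3)))
      (isClosed_tsupport v) hvL
  set χ : EuclideanSpace ℝ (Fin 3) → ℝ := ⇑χ₀ with hχdef
  have hχ : ContDiff ℝ 2 χ := (contMDiff_iff_contDiff.mp χ₀.contMDiff).of_le (by norm_cast)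
  obtain ⟨W, hWo, hvW, hW1⟩ := eventually_nhdsSet_iff_exists.mp hχ1
  set W' : Set (EuclideanSpace ℝ (Fin 3)) := W ∩ interior L with hW'def
  have hW'o : IsOpen W' := hWo.inter isOpen_interior
  have hvW' : tsupport v ⊆ W' := subset_inter hvW hvL
  have hW'U : W' ⊆ U := fun x hx => hLU (interior_subset hx.2)
  have hχone : ∀ x ∈ W', χ x = 1 := fun x hx => hW1 x hx.1
  -- cut-off version of g
  set G : EuclideanSpace ℝ (Fin 3) → ℂ := fun x => (χ x : ℂ) * g x with hGdef
  have hχC : ContDiff ℝ 2 fun x => (χ x : ℂ) := Complex.ofRealCLM.contDiff.comp hχ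
  have hGzero : ∀ x ∉ L, G x = 0 := by
    intro x hx
    simp [hGdef, hχ0 x hx]
  have hG2 : ContDiff ℝ 2 G := by
    rw [contDiff_iff_contDiffAt]
    intro x
    by_cases hx : x ∈ U
    · exact ((hχC.contDiffOn).mul hg).contDiffAt (hU.mem_nhds hx)
    · have hxL : x ∉ L := fun h => hx (hLU h)
      have hev : (fun _ => (0 : ℂ)) =ᶠ[𝓝 x] G := by
        filter_upwards [hLc.isClosed.isOpen_compl.mem_nhds hxL] with y hy
        exact (hGzero y hy).symm
      exact contDiffAt_const.congr_of_eventuallyEq hev.symm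
  have hGc : HasCompactSupport G := HasCompactSupport.intro hLc hGzero
  have hGg : ∀ y ∈ W', G y = g y := by
    intro y hy
    simp [hGdef, hχone y hy]
  -- conjugate of G
  set Gb : EuclideanSpace ℝ (Fin 3) → ℂ := fun x => (starRingEnd ℂ) (G x) with hGbdef
  have hGb2 : ContDiff ℝ 2 Gb := by
    have : Gb = ⇑Complex.conjCLE ∘ G := by funext y; simp [hGbdef, Complex.conjCLE_apply]
    rw [this]
    exact Complex.conjCLE.contDiff.comp hG2
  have h21 : (2 : ℕ∞) = 1 + 1 := by norm_num
  have hv11 : ContDiff ℝ (1 + 1 : ℕ∞) v := by rw [← h21]; exact hv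
  have hGb11 : ContDiff ℝ (1 + 1 : ℕ∞) Gb := by rw [← h21]; exact hGb2
  have hG11 : ContDiff ℝ (1 + 1 : ℕ∞) G := by rw [← h21]; exact hG2
  -- integrability facts
  have hcontDDv : ∀ i, Continuous fun x => Dp i (Dp i v) x := by
    intro i
    exact continuous_Dp (contDiff_Dp (n := 1) hv11)
  have hcontDDGb : ∀ i, Continuous fun x => Dp i (Dp i Gb) x := by
    intro i
    exact continuous_Dp (contDiff_Dp (n := 1) hGb11)
  have int1 : ∀ i : Fin 3, Integrable fun x => Dp i (Dp i v) x * Gb x := by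
    intro i
    apply Continuous.integrable_of_hasCompactSupport
    · exact (hcontDDv i).mul hGb2.continuous
    · exact (hcs_Dp (hcs_Dp hvc)).mul_right
  have int2 : Integrable fun x => v x * Gb x := by
    apply Continuous.integrable_of_hasCompactSupport
    · exact hv.continuous.mul hGb2.continuous
    · exact hvc.mul_right
  have int3 : ∀ i : Fin 3, Integrable fun x => v x * Dp i (Dp i Gb) x := by
    intro i
    apply Continuous.integrable_of_hasCompactSupport
    · exact hv.continuous.mul (hcontDDGb i)
    · exact hvc.mul_right
  -- double integration by parts
  have F1 : ∀ i : Fin 3, (∫ x, Dp i (Dp i v) x * Gb x) = ∫ x, v x * Dp i (Dp i Gb) x := by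
    intro i
    have b1 := byparts i (Dp i v) Gb (contDiff_Dp (n := 1) hv11) (hGb2.of_le one_le_two)
      (hcs_Dp hvc)
    have b2 := byparts i v (Dp i Gb) (hv.of_le one_le_two) (contDiff_Dp (n := 1) hGb11) hvc
    rw [b1, b2, neg_neg]
  -- the main integral identity, first evaluation
  set S : ℂ := ∫ x, g x * Gb x with hSdef
  have eval1 : (∫ x, (∑ i : Fin 3, Dp i (Dp i v) x * Gb x + a * (v x * Gb x))) = -S := by
    have hpt : ∀ x, (∑ i : Fin 3, Dp i (Dp i v) x * Gb x + a * (v x * Gb x))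
        = -(g x * Gb x) := by
      intro x
      by_cases hx : x ∈ U
      · have h1 := heq1 x hx
        rw [lap_eq hv.contDiffAt] at h1
        calc (∑ i : Fin 3, Dp i (Dp i v) x * Gb x + a * (v x * Gb x))
            = (∑ i : Fin 3, Dp i (Dp i v) x + a * v x) * Gb x := by
              rw [add_mul, Finset.sum_mul]; ring
          _ = -g x * Gb x := by rw [h1]
          _ = -(g x * Gb x) := by ring
      · have hxv : x ∉ tsupport v := fun h => hx (hvU h)
        have hxL : x ∉ L := fun h => hx (hLU h)
        have hGb0 : Gb x = 0 := by simp [hGbdef, hGzero x hxL]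
        have hv0 : v x = 0 := image_eq_zero_of_notMem_tsupport hxv
        simp [hGb0, hv0, fun i => DpDp_zero_of_nmem hxv i]
    rw [show (fun x => ∑ i : Fin 3, Dp i (Dp i v) x * Gb x + a * (v x * Gb x))
      = fun x => -(g x * Gb x) from funext hpt]
    rw [integral_neg]
  -- second evaluation
  have eval2 : (∫ x, (∑ i : Fin 3, Dp i (Dp i v) x * Gb x + a * (v x * Gb x))) = 0 := by
    rw [integral_add (integrable_finset_sum _ fun i _ => int1 i) (int2.const_mul a),
      integral_finset_sum _ fun i _ => int1 i]
    simp only [fun i => F1 i]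
    rw [integral_const_mul, ← integral_finset_sum _ fun i _ => int3 i,
      ← integral_const_mul, ← integral_add (integrable_finset_sum _ fun i _ => int3 i)
        (int2.const_mul a)]
    have hpt : ∀ x, (∑ i : Fin 3, v x * Dp i (Dp i Gb) x + a * (v x * Gb x)) = 0 := by
      intro x
      have hfac : (∑ i : Fin 3, v x * Dp i (Dp i Gb) x + a * (v x * Gb x))
          = v x * (∑ i : Fin 3, Dp i (Dp i Gb) x + a * Gb x) := by
        rw [mul_add, Finset.mul_sum]; ring
      rw [hfac]
      by_cases hxv : x ∈ tsupport v
      · have hxW' : x ∈ W' := hvW' hxv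
        have hxU : x ∈ U := hW'U hxW'
        -- conjugation + locality
        have hDG : ∀ i : Fin 3, Dp i (Dp i Gb) x = (starRingEnd ℂ) (Dp i (Dp i G) x) := by
          intro i
          have h1 : Dp i Gb = fun y => (starRingEnd ℂ) (Dp i G y) :=
            funext fun y => Dp_conj G i y
          rw [show Dp i (Dp i Gb) x = Dp i (fun y => (starRingEnd ℂ) (Dp i G y)) x from by
            rw [h1]]
          exact Dp_conj (Dp i G) i x
        have hDgG : ∀ i : Fin 3, Dp i (Dp i G) x = Dp i (Dp i g) x := by
          intro i
          have h1 : ∀ y ∈ W', Dp i G y = Dp i g y := Dp_congr_on hW'o hGg i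
          exact Dp_congr_on hW'o h1 i x hxW'
        have hlapg : (∑ i : Fin 3, Dp i (Dp i g) x) = lap g x :=
          (lap_eq (hg.contDiffAt (hU.mem_nhds hxU))).symm
        have hg2 : lap g x = -((starRingEnd ℂ) a * g x) :=
          eq_neg_of_add_eq_zero_left (heq2 x hxU)
        have hGbx : Gb x = (starRingEnd ℂ) (g x) := by
          simp [hGbdef, hGg x hxW']
        have : (∑ i : Fin 3, Dp i (Dp i Gb) x) = -(a * (starRingEnd ℂ) (g x)) := by
          simp only [fun i => hDG i, fun i => hDgG i]
          rw [← map_sum, hlapg, hg2]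
          simp [map_mul]
        rw [this, hGbx]
        ring_nf
      · simp [image_eq_zero_of_notMem_tsupport hxv]
    rw [show (fun x => ∑ i : Fin 3, v x * Dp i (Dp i Gb) x + a * (v x * Gb x))
      = fun _ => (0 : ℂ) from funext hpt]
    simp
  have hS0 : S = 0 := by
    have := eval1.symm.trans eval2
    simpa using this
  -- express S as a real integral
  set r : EuclideanSpace ℝ (Fin 3) → ℝ := fun x => χ x * Complex.normSq (g x) with hrdef
  have hptr : ∀ x, g x * Gb x = ((r x : ℝ) : ℂ) := by
    intro x
    simp only [hGbdef, hGdef, hrdef, map_mul, Complex.conj_ofReal]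
    push_cast
    rw [← Complex.mul_conj]
    ring
  have hrint0 : (∫ x, r x) = 0 := by
    have h1 : (∫ x, ((r x : ℝ) : ℂ)) = ((∫ x, r x : ℝ) : ℂ) := integral_ofReal
    have h2 : (∫ x, ((r x : ℝ) : ℂ)) = 0 := by
      rw [show (fun x => ((r x : ℝ) : ℂ)) = fun x => g x * Gb x from funext fun x =>
        (hptr x).symm]
      exact hS0
    rw [h1] at h2
    exact_mod_cast h2
  have hrnonneg : ∀ x, 0 ≤ r x := fun x =>
    mul_nonneg (hχmem x).1 (Complex.normSq_nonneg _)
  have hrzero : ∀ x ∉ L, r x = 0 := by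
    intro x hx; simp [hrdef, hχ0 x hx]
  have hrc : Continuous r := by
    rw [continuous_iff_continuousAt]
    intro x
    by_cases hx : x ∈ U
    · have hgc : ContinuousAt g x := (hg.continuousOn.continuousAt (hU.mem_nhds hx))
      exact hχ.continuous.continuousAt.mul (Complex.continuous_normSq.continuousAt.comp hgc)
    · have hxL : x ∉ L := fun h => hx (hLU h)
      have hev : (fun _ => (0 : ℝ)) =ᶠ[𝓝 x] r := by
        filter_upwards [hLc.isClosed.isOpen_compl.mem_nhds hxL] with y hy
        exact (hrzero y hy).symm
      exact continuousAt_const.congr hev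
  have hrcs : HasCompactSupport r := HasCompactSupport.intro hLc hrzero
  have hrintg : Integrable r := hrc.integrable_of_hasCompactSupport hrcs
  have hrae : r =ᵐ[volume] 0 :=
    (integral_eq_zero_iff_of_nonneg hrnonneg hrintg).mp hrint0
  have hre : r = 0 := (hrc.ae_eq_iff_eq volume continuous_const).mp hrae
  -- conclusion
  intro x hx
  by_cases hxv : x ∈ tsupport v
  · have hxW' : x ∈ W' := hvW' hxv
    have h1 : r x = 0 := congrFun hre x
    rw [hrdef] at h1
    simp only [hχone x hxW', one_mul] at h1
    exact Complex.normSq_eq_zero.mp h1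
  · have h1 := heq1 x hx
    rw [lap_eq hv.contDiffAt] at h1
    rw [Finset.sum_eq_zero (fun i _ => DpDp_zero_of_nmem hxv i),
      image_eq_zero_of_notMem_tsupport hxv] at h1
    simpa using h1.symm
end

section
/- Fix k ∈ ℝ, a center c ∈ ℝ³, a radius R > 0, and points p, q ∈ ℝ³. For σ > 0 put s = k + iσ. Then s² − conj(s)² = 4 i k σ, the product Φ_s(y,p)·conj(Φ_s(y,q)) is integrable on the ball B(c,R), and the function σ ↦ (s² − conj(s)²) · ∫_{B(c,R)} Φ_{k+iσ}(y,p) · conj(Φ_{k+iσ}(y,q)) dy tends to 0 as σ → 0 from the right. -/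
open MeasureTheory

section Aux
open Metric Set
-- step 1: the inv-square integrability lemma
lemma aux_integrableOn_inv_sq (p c : EuclideanSpace ℝ (Fin 3)) (R : ℝ) :
    IntegrableOn (fun y : EuclideanSpace ℝ (Fin 3) => ‖y - p‖⁻¹ ^ 2) (Metric.ball c R) := by
  have hmeas : Measurable fun y : EuclideanSpace ℝ (Fin 3) => ‖y - p‖⁻¹ ^ 2 :=
    (measurable_id.sub_const p).norm.inv.pow_const 2
  refine ⟨hmeas.aestronglyMeasurable, ?_⟩
  rw [hasFiniteIntegral_iff_ofReal (Filter.Eventually.of_forall fun y => by positivity)]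
  rw [lintegral_eq_lintegral_meas_le _ (Filter.Eventually.of_forall fun y => by positivity)
    hmeas.aemeasurable]
  set ν := volume.restrict (Metric.ball c R) with hν
  have hsub : ∀ t : ℝ, 0 < t →
      {a : EuclideanSpace ℝ (Fin 3) | t ≤ ‖a - p‖⁻¹ ^ 2} ⊆
        Metric.closedBall p (t ^ (-(1/2) : ℝ)) := by
    intro t ht a ha
    simp only [mem_setOf_eq] at ha
    simp only [Metric.mem_closedBall, dist_eq_norm]
    rcases eq_or_lt_of_le (norm_nonneg (a - p)) with h0 | h0
    · rw [← h0]; positivity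
    · have h1 : ‖a - p‖ ^ 2 ≤ t⁻¹ := by
        rw [← inv_inv (‖a - p‖ ^ 2), ← inv_pow]
        exact inv_anti₀ ht ha
      calc ‖a - p‖ = (‖a - p‖ ^ 2) ^ ((1:ℝ)/2) := by
              rw [← Real.rpow_natCast (‖a - p‖) 2, ← Real.rpow_mul (norm_nonneg _)]
              norm_num
        _ ≤ (t⁻¹) ^ ((1:ℝ)/2) := by
              apply Real.rpow_le_rpow (by positivity) h1 (by norm_num)
        _ = t ^ (-(1/2) : ℝ) := by
              rw [← Real.rpow_neg_one t, ← Real.rpow_mul ht.le]; norm_num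
  calc ∫⁻ t in Ioi (0:ℝ), ν {a | t ≤ ‖a - p‖⁻¹ ^ 2}
      ≤ ∫⁻ t in Ioc (0:ℝ) 1 ∪ Ioi 1, ν {a | t ≤ ‖a - p‖⁻¹ ^ 2} :=
        lintegral_mono_set Ioi_subset_Ioc_union_Ioi
    _ ≤ (∫⁻ t in Ioc (0:ℝ) 1, ν {a | t ≤ ‖a - p‖⁻¹ ^ 2})
        + ∫⁻ t in Ioi (1:ℝ), ν {a | t ≤ ‖a - p‖⁻¹ ^ 2} := lintegral_union_le _ _ _
    _ ≤ (∫⁻ _ in Ioc (0:ℝ) 1, volume (Metric.ball c R))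
        + ∫⁻ t in Ioi (1:ℝ), volume (Metric.closedBall p (t ^ (-(1/2) : ℝ))) := by
        refine add_le_add (setLIntegral_mono' measurableSet_Ioc fun t ht => ?_)
          (setLIntegral_mono' measurableSet_Ioi fun t ht => ?_)
        · exact (measure_mono (subset_univ _)).trans_eq (Measure.restrict_apply_univ _)
        · exact (Measure.restrict_apply_le _ _).trans
            (measure_mono (hsub t (lt_trans one_pos ht)))
    _ < ⊤ := by
        apply ENNReal.add_lt_top.2
        constructor
        · rw [setLIntegral_const]
          exact ENNReal.mul_lt_top measure_ball_lt_top (by simp [Real.volume_Ioc])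
        · have hvol : ∀ t : ℝ, t ∈ Ioi (1:ℝ) →
              volume (Metric.closedBall p (t ^ (-(1/2) : ℝ)))
                = ENNReal.ofReal (t ^ (-(3/2) : ℝ)) * volume (Metric.ball (0 : EuclideanSpace ℝ (Fin 3)) 1) := by
            intro t ht
            have ht0 : (0:ℝ) < t := lt_trans one_pos ht
            rw [Measure.addHaar_closedBall _ _ (by positivity)]
            congr 2
            rw [show (Module.finrank ℝ (EuclideanSpace ℝ (Fin 3))) = 3 by simp,
              ← Real.rpow_natCast (t ^ (-(1/2):ℝ)) 3, ← Real.rpow_mul ht0.le]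
            norm_num
          rw [setLIntegral_congr_fun measurableSet_Ioi hvol,
            lintegral_mul_const _ (by fun_prop)]
          apply ENNReal.mul_lt_top _ measure_ball_lt_top
          refine IntegrableOn.setLIntegral_lt_top ?_
          exact integrableOn_Ioi_rpow_of_lt (by norm_num) one_pos

lemma measurable_Phi (s : ℂ) (p : EuclideanSpace ℝ (Fin 3)) :
    Measurable (fun y => Phi s y p) := by
  unfold Phi
  fun_prop

lemma norm_Phi_le (s : ℂ) (hs : 0 ≤ s.im) (y p : EuclideanSpace ℝ (Fin 3)) :
    ‖Phi s y p‖ ≤ (4 * Real.pi)⁻¹ * ‖y - p‖⁻¹ := by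
  unfold Phi
  rw [norm_div]
  rcases eq_or_lt_of_le (norm_nonneg (y - p)) with h0 | h0
  · rw [← h0]; simp
  · have hre : (Complex.I * s * (‖y - p‖ : ℂ)).re = -s.im * ‖y - p‖ := by
      simp [Complex.mul_re, Complex.mul_im]
    have hexp : ‖Complex.exp (Complex.I * s * (‖y - p‖ : ℂ))‖ ≤ 1 := by
      rw [Complex.norm_exp, hre]
      apply Real.exp_le_one_iff.2
      have := norm_nonneg (y - p)
      nlinarith
    have hden : ‖((4 * Real.pi * ‖y - p‖ : ℝ) : ℂ)‖ = 4 * Real.pi * ‖y - p‖ := by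
      rw [Complex.norm_real, Real.norm_of_nonneg (by positivity)]
    rw [hden]
    rw [div_le_iff₀ (by positivity)]
    calc ‖Complex.exp (Complex.I * s * (‖y - p‖ : ℂ))‖ ≤ 1 := hexp
      _ = (4 * Real.pi)⁻¹ * ‖y - p‖⁻¹ * (4 * Real.pi * ‖y - p‖) := by
          field_simp

lemma aux_g_integrable (p q c : EuclideanSpace ℝ (Fin 3)) (R : ℝ) :
    IntegrableOn (fun y : EuclideanSpace ℝ (Fin 3) =>
      ((4 * Real.pi)⁻¹ * ‖y - p‖⁻¹) * ((4 * Real.pi)⁻¹ * ‖y - q‖⁻¹)) (Metric.ball c R) := by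
  have hint : IntegrableOn (fun y : EuclideanSpace ℝ (Fin 3) =>
      ((4 * Real.pi)⁻¹)^2 * (‖y - p‖⁻¹ ^ 2 + ‖y - q‖⁻¹ ^ 2)) (Metric.ball c R) :=
    ((aux_integrableOn_inv_sq p c R).add (aux_integrableOn_inv_sq q c R)).const_mul _
  refine hint.mono' ?_ ?_
  · exact (((measurable_const.mul (measurable_id.sub_const p).norm.inv)).mul
      ((measurable_const.mul (measurable_id.sub_const q).norm.inv))).aestronglyMeasurable
  · filter_upwards with y
    rw [Real.norm_of_nonneg (by positivity)]
    have h1 : (0:ℝ) ≤ ‖y - p‖⁻¹ := by positivity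
    have h2 : (0:ℝ) ≤ ‖y - q‖⁻¹ := by positivity
    have hπ : (0:ℝ) ≤ (4 * Real.pi)⁻¹ := by positivity
    nlinarith [sq_nonneg (‖y - p‖⁻¹ - ‖y - q‖⁻¹)]

lemma norm_PhiProd_le (s : ℂ) (hs : 0 ≤ s.im) (y p q : EuclideanSpace ℝ (Fin 3)) :
    ‖Phi s y p * (starRingEnd ℂ) (Phi s y q)‖ ≤
      ((4 * Real.pi)⁻¹ * ‖y - p‖⁻¹) * ((4 * Real.pi)⁻¹ * ‖y - q‖⁻¹) := by
  rw [norm_mul, RCLike.norm_conj]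
  exact mul_le_mul (norm_Phi_le s hs y p) (norm_Phi_le s hs y q) (norm_nonneg _)
    (by positivity)

end Aux

/-- Fix `k ∈ ℝ`, a center `c`, a radius `R > 0` and points `p, q ∈ ℝ³`. For
`σ > 0` put `s = k + iσ`. Then `s² − conj(s)² = 4ikσ`, the product `Φ_s(y,p)·conj(Φ_s(y,q))` is
integrable on `B(c,R)`, and `(s² − conj(s)²) ∫_{B(c,R)} Φ_s(y,p) conj(Φ_s(y,q)) dy → 0` as
`σ → 0⁺`. -/
theorem stmt10 (k : ℝ) (c : EuclideanSpace ℝ (Fin 3)) (R : ℝ) (hR : 0 < R)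
    (p q : EuclideanSpace ℝ (Fin 3)) :
    (∀ σ : ℝ, 0 < σ →
      ((k : ℂ) + (σ : ℂ) * Complex.I) ^ 2
          - (starRingEnd ℂ ((k : ℂ) + (σ : ℂ) * Complex.I)) ^ 2
        = 4 * Complex.I * (k : ℂ) * (σ : ℂ)) ∧
    (∀ σ : ℝ, 0 < σ →
      Integrable
        (fun y => Phi ((k : ℂ) + (σ : ℂ) * Complex.I) y p *
          (starRingEnd ℂ) (Phi ((k : ℂ) + (σ : ℂ) * Complex.I) y q))
        (volume.restrict (Metric.ball c R))) ∧
    Filter.Tendsto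
      (fun σ : ℝ =>
        (((k : ℂ) + (σ : ℂ) * Complex.I) ^ 2
            - (starRingEnd ℂ ((k : ℂ) + (σ : ℂ) * Complex.I)) ^ 2) *
          ∫ y in Metric.ball c R,
            Phi ((k : ℂ) + (σ : ℂ) * Complex.I) y p *
              (starRingEnd ℂ) (Phi ((k : ℂ) + (σ : ℂ) * Complex.I) y q))
      (nhdsWithin 0 (Set.Ioi 0)) (nhds 0) := by
  have him : ∀ σ : ℝ, ((k : ℂ) + (σ : ℂ) * Complex.I).im = σ := by
    intro σ; simp
  have hpart1 : ∀ σ : ℝ, 0 < σ →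
      ((k : ℂ) + (σ : ℂ) * Complex.I) ^ 2
          - (starRingEnd ℂ ((k : ℂ) + (σ : ℂ) * Complex.I)) ^ 2
        = 4 * Complex.I * (k : ℂ) * (σ : ℂ) := by
    intro σ hσ
    have : (starRingEnd ℂ) ((k : ℂ) + (σ : ℂ) * Complex.I)
        = (k : ℂ) - (σ : ℂ) * Complex.I := by
      rw [map_add, map_mul, Complex.conj_ofReal, Complex.conj_ofReal, Complex.conj_I]
      ring
    rw [this]; ring
  have hpart2 : ∀ σ : ℝ, 0 < σ →
      Integrable
        (fun y => Phi ((k : ℂ) + (σ : ℂ) * Complex.I) y p *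
          (starRingEnd ℂ) (Phi ((k : ℂ) + (σ : ℂ) * Complex.I) y q))
        (volume.restrict (Metric.ball c R)) := by
    intro σ hσ
    refine (aux_g_integrable p q c R).mono' ?_ ?_
    · exact ((measurable_Phi _ p).mul
        (Complex.continuous_conj.measurable.comp (measurable_Phi _ q))).aestronglyMeasurable
    · filter_upwards with y
      exact norm_PhiProd_le _ (by rw [him]; exact hσ.le) y p q
  refine ⟨hpart1, hpart2, ?_⟩
  set A : ℝ := ∫ y in Metric.ball c R,
      ((4 * Real.pi)⁻¹ * ‖y - p‖⁻¹) * ((4 * Real.pi)⁻¹ * ‖y - q‖⁻¹) with hA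
  have hA0 : 0 ≤ A := by
    apply integral_nonneg
    intro y; positivity
  apply squeeze_zero_norm' (a := fun σ : ℝ => 4 * |k| * A * σ)
  · filter_upwards [self_mem_nhdsWithin] with σ hσ
    rw [Set.mem_Ioi] at hσ
    rw [hpart1 σ hσ, norm_mul]
    have h1 : ‖(4 : ℂ) * Complex.I * (k : ℂ) * (σ : ℂ)‖ = 4 * |k| * σ := by
      simp [norm_mul, Complex.norm_real, Real.norm_eq_abs, abs_of_pos hσ]
    rw [h1]
    have h2 : ‖∫ y in Metric.ball c R,
        Phi ((k : ℂ) + (σ : ℂ) * Complex.I) y p *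
          (starRingEnd ℂ) (Phi ((k : ℂ) + (σ : ℂ) * Complex.I) y q)‖ ≤ A := by
      refine (norm_integral_le_integral_norm _).trans ?_
      rw [hA]
      apply integral_mono_of_nonneg
      · filter_upwards with y; positivity
      · exact aux_g_integrable p q c R
      · filter_upwards with y
        exact norm_PhiProd_le _ (by rw [him]; exact hσ.le) y p q
    calc 4 * |k| * σ * ‖∫ y in Metric.ball c R,
          Phi ((k : ℂ) + (σ : ℂ) * Complex.I) y p *
            (starRingEnd ℂ) (Phi ((k : ℂ) + (σ : ℂ) * Complex.I) y q)‖
        ≤ 4 * |k| * σ * A := by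
          apply mul_le_mul_of_nonneg_left h2 (by positivity)
      _ = 4 * |k| * A * σ := by ring
  · have : Filter.Tendsto (fun σ : ℝ => 4 * |k| * A * σ) (nhds 0)
        (nhds (4 * |k| * A * 0)) :=
      (Filter.tendsto_id.const_mul _)
    rw [mul_zero] at this
    exact this.mono_left nhdsWithin_le_nhds
end
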